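/- arXiv:0802.4040 — 8 statements merged into one kernel-verified Lean document; each statement's English description precedes it below -/
import Mathlib

section
/- Let m ≥ 1, let λ₁, …, λ_m > 0 and μ > 0, and let X₁, …, X_m, Y be independent random variables with Xᵢ distributed as EXP(λᵢ) and Y distributed as EXP(μ). Set S₀ = 0 and S_k = X₁ + ⋯ + X_k. Then for every k with 1 ≤ k ≤ m, the probability of the event {S_{k−1} ≤ Y < S_k} equals (μ/(λ_k + μ)) · ∏_{i=1}^{k−1} λᵢ/(λᵢ + μ). -/
open MeasureTheory ProbabilityTheory

open Real Set
open scoped ENNReal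


lemma lintegral_pi_prod_aux : ∀ (n : ℕ) (ν : Fin n → Measure ℝ),
    (∀ i, SigmaFinite (ν i)) → ∀ (f : Fin n → ℝ → ℝ≥0∞), (∀ i, Measurable (f i)) →
    ∫⁻ x, ∏ i, f i (x i) ∂Measure.pi ν = ∏ i, ∫⁻ t, f i t ∂(ν i) := by
  intro n
  induction n with
  | zero =>
    intro ν _ f _
    rw [Measure.pi_of_empty]
    simp
  | succ n ih =>
    intro ν hν f hf
    haveI := hν
    have hpres := measurePreserving_piFinSuccAbove ν 0
    have hg : Measurable (fun p : ℝ × (Fin n → ℝ) => f 0 p.1 * ∏ i, f i.succ (p.2 i)) := by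
      refine Measurable.mul ((hf 0).comp measurable_fst) ?_
      exact Finset.measurable_prod _ fun i _ => (hf i.succ).comp ((measurable_pi_apply i).comp measurable_snd)
    have h1 := hpres.lintegral_comp hg
    have hcomp : ∀ x : Fin (n+1) → ℝ,
        (fun p : ℝ × (Fin n → ℝ) => f 0 p.1 * ∏ i, f i.succ (p.2 i))
          (MeasurableEquiv.piFinSuccAbove (fun _ => ℝ) 0 x) = ∏ i, f i (x i) := by
      intro x
      rw [Fin.prod_univ_succ]
      simp [MeasurableEquiv.piFinSuccAbove, Fin.succAbove, Fin.tail]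
    have key : ∫⁻ x, ∏ i, f i (x i) ∂Measure.pi ν
        = ∫⁻ b : ℝ × (Fin n → ℝ),
            f 0 b.1 * ∏ i, f i.succ (b.2 i) ∂(ν 0).prod (Measure.pi fun j => ν (Fin.succAbove 0 j)) := by
      rw [← h1]
      exact lintegral_congr fun x => (hcomp x).symm
    have h2 := lintegral_prod_mul (μ := ν 0) (ν := Measure.pi fun j => ν (Fin.succAbove 0 j))
      (f := f 0) (g := fun y : Fin n → ℝ => ∏ i, f i.succ (y i)) ((hf 0).aemeasurable)
      ((Finset.measurable_prod _ fun i _ => (hf i.succ).comp (measurable_pi_apply i)).aemeasurable)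
    rw [key, h2, ih _ (fun i => hν _) _ (fun i => hf i.succ), Fin.prod_univ_succ]
    simp [Fin.succAbove_zero]

lemma map_pi_of_iIndepFun {Ω : Type*} [MeasurableSpace Ω] (P : Measure Ω) [IsProbabilityMeasure P]
    {n : ℕ} (f : Fin n → Ω → ℝ) (hf : ∀ i, Measurable (f i))
    (h : iIndepFun f P) :
    Measure.map (fun ω i => f i ω) P = Measure.pi (fun i => Measure.map (f i) P) := by
  haveI : ∀ i, IsProbabilityMeasure (Measure.map (f i) P) :=
    fun i => Measure.isProbabilityMeasure_map (hf i).aemeasurable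
  refine (Measure.pi_eq fun s hs => ?_).symm
  rw [Measure.map_apply (measurable_pi_iff.2 hf) (MeasurableSet.univ_pi hs)]
  have hpre : (fun ω i => f i ω) ⁻¹' (univ.pi s) = ⋂ i ∈ Finset.univ, f i ⁻¹' (s i) := by
    ext ω; simp [Set.mem_pi]
  rw [hpre, h.measure_inter_preimage_eq_mul Finset.univ (fun i _ => hs i)]
  · simp [Measure.map_apply (hf _) (hs _)]

lemma expMeasure_Iio_zero (r : ℝ) : expMeasure r (Iio 0) = 0 := by
  rw [expMeasure, gammaMeasure, withDensity_apply _ measurableSet_Iio]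
  exact lintegral_gammaPDF_of_nonpos le_rfl

lemma expMeasure_Ico {r : ℝ} (hr : 0 < r) {a b : ℝ} (ha : 0 ≤ a) (hab : a ≤ b) :
    expMeasure r (Ico a b) = ENNReal.ofReal (exp (-(r * a)) - exp (-(r * b))) := by
  rw [expMeasure, gammaMeasure, withDensity_apply _ measurableSet_Ico]
  have hpdf : ∀ x ∈ Ico a b, gammaPDF 1 r x = ENNReal.ofReal (r * exp (-(r * x))) := by
    intro x hx
    rw [show gammaPDF 1 r x = exponentialPDF r x from rfl,
      exponentialPDF_of_nonneg (le_trans ha hx.1)]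
  rw [setLIntegral_congr_fun measurableSet_Ico hpdf]
  have hcont : Continuous (fun x : ℝ => r * exp (-(r * x))) := by continuity
  have hint : IntegrableOn (fun x : ℝ => r * exp (-(r * x))) (Ico a b) := by
    exact (hcont.integrableOn_Icc).mono_set Ico_subset_Icc_self
  rw [← ofReal_integral_eq_lintegral_ofReal hint
    (ae_of_all _ fun x => by positivity)]
  congr 1
  rw [integral_Ico_eq_integral_Ioo, ← integral_Ioc_eq_integral_Ioo, ← intervalIntegral.integral_of_le hab]
  rw [intervalIntegral.integral_eq_sub_of_hasDerivAt
    (fun x _ => hasDerivAt_neg_exp_mul_exp (r := r) (x := x))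
    (hcont.intervalIntegrable a b)]
  ring

lemma lintegral_exp_neg_expMeasure {l μ : ℝ} (hl : 0 < l) (hμ : 0 < μ) :
    ∫⁻ t, ENNReal.ofReal (exp (-(μ * t))) ∂expMeasure l = ENNReal.ofReal (l / (l + μ)) := by
  have hlμ : 0 < l + μ := by linarith
  have hm2 : Measurable (exponentialPDF (l + μ)) := (measurable_exponentialPDFReal _).ennreal_ofReal
  have hm : Measurable (gammaPDF 1 l) := (measurable_gammaPDFReal 1 l).ennreal_ofReal
  rw [expMeasure, gammaMeasure, lintegral_withDensity_eq_lintegral_mul _ hm (by fun_prop)]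
  have hpt : (fun t => gammaPDF 1 l t * ENNReal.ofReal (exp (-(μ * t))))
      = fun t => ENNReal.ofReal (l / (l + μ)) * exponentialPDF (l + μ) t := by
    funext t
    rcases le_or_gt 0 t with ht | ht
    · rw [show gammaPDF 1 l t = exponentialPDF l t from rfl,
        exponentialPDF_of_nonneg ht, exponentialPDF_of_nonneg ht,
        ← ENNReal.ofReal_mul (by positivity), ← ENNReal.ofReal_mul (by positivity)]
      congr 1
      have : rexp (-(l * t)) * rexp (-(μ * t)) = rexp (-((l + μ) * t)) := by
        rw [← Real.exp_add]; ring_nf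
      rw [mul_assoc, this, ← mul_assoc, div_mul_cancel₀ _ (ne_of_gt hlμ)]
    · rw [show gammaPDF 1 l t = exponentialPDF l t from rfl,
        exponentialPDF_of_neg ht, exponentialPDF_of_neg ht]
      simp
  simp only [Pi.mul_apply]
  rw [show (fun a => gammaPDF 1 l a * ENNReal.ofReal (rexp (-(μ * a)))) = _ from hpt, lintegral_const_mul _ hm2, lintegral_exponentialPDF_eq_one hlμ, mul_one]

/-- Let `X 0, …, X (m-1), Y` be independent exponential random
variables, `X i` with rate `lam i > 0` and `Y` with rate `μ > 0`.  With partial sums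
`S k = X 0 + ⋯ + X (k-1)`, for every `k` (`1 ≤ k ≤ m`, here encoded by `k : Fin m`,
with `S (k-1) = ∑ i < k, X i` and `S k = ∑ i ≤ k, X i`) the probability of the event
`{S (k-1) ≤ Y < S k}` equals `(μ / (lam k + μ)) · ∏_{i<k} lam i / (lam i + μ)`. -/
theorem prob_partialSum_le_exponential_lt
    {Ω : Type*} [MeasurableSpace Ω] (P : Measure Ω) [IsProbabilityMeasure P]
    (m : ℕ) (hm : 1 ≤ m) (lam : Fin m → ℝ) (μ : ℝ)
    (hlam : ∀ i, 0 < lam i) (hμ : 0 < μ)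
    (X : Fin m → Ω → ℝ) (Y : Ω → ℝ)
    (hX : ∀ i, Measurable (X i)) (hY : Measurable Y)
    (hindep : iIndepFun (Fin.snoc X Y : Fin (m + 1) → Ω → ℝ) P)
    (hlawX : ∀ i, Measure.map (X i) P = expMeasure (lam i))
    (hlawY : Measure.map Y P = expMeasure μ)
    (k : Fin m) :
    P {ω | (∑ i ∈ Finset.Iio k, X i ω) ≤ Y ω ∧ Y ω < ∑ i ∈ Finset.Iic k, X i ω} =
      ENNReal.ofReal ((μ / (lam k + μ)) * ∏ i ∈ Finset.Iio k, lam i / (lam i + μ)) := by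
  classical
  set ν : Fin (m+1) → Measure ℝ :=
    fun i => Fin.lastCases (expMeasure μ) (fun j => expMeasure (lam j)) i with hν
  have hνP : ∀ i, IsProbabilityMeasure (ν i) := by
    intro i
    induction i using Fin.lastCases with
    | last => simp only [hν, Fin.lastCases_last]; exact isProbabilityMeasure_expMeasure hμ
    | cast j => simp only [hν, Fin.lastCases_castSucc]; exact isProbabilityMeasure_expMeasure (hlam j)
  haveI := hνP
  haveI : ∀ j : Fin m, IsProbabilityMeasure (expMeasure (lam j)) :=
    fun j => isProbabilityMeasure_expMeasure (hlam j)
  haveI : IsProbabilityMeasure (expMeasure μ) := isProbabilityMeasure_expMeasure hμ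
  have hXY : ∀ i : Fin (m+1), Measurable ((Fin.snoc X Y : Fin (m + 1) → Ω → ℝ) i) := by
    intro i
    induction i using Fin.lastCases with
    | last => simpa [Fin.snoc_last] using hY
    | cast j => simpa [Fin.snoc_castSucc] using hX j
  have hlaw : ∀ i, Measure.map ((Fin.snoc X Y : Fin (m + 1) → Ω → ℝ) i) P = ν i := by
    intro i
    induction i using Fin.lastCases with
    | last => simp only [hν, Fin.snoc_last, Fin.lastCases_last]; exact hlawY
    | cast j => simp only [hν, Fin.snoc_castSucc, Fin.lastCases_castSucc]; exact hlawX j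
  have hmap : Measure.map (fun ω i => (Fin.snoc X Y : Fin (m + 1) → Ω → ℝ) i ω) P = Measure.pi ν := by
    rw [map_pi_of_iIndepFun P _ hXY hindep]
    exact congrArg _ (funext hlaw)
  set A : Set (Fin (m+1) → ℝ) :=
    {x | (∑ i ∈ Finset.Iio k, x i.castSucc) ≤ x (Fin.last m) ∧
      x (Fin.last m) < ∑ i ∈ Finset.Iic k, x i.castSucc} with hAdef
  have hAmeas : MeasurableSet A := by
    have hme : ∀ j : Fin (m+1), Measurable fun x : Fin (m+1) → ℝ => x j :=
      fun j => measurable_pi_apply j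
    have hs1 : Measurable fun x : Fin (m+1) → ℝ => ∑ i ∈ Finset.Iio k, x i.castSucc :=
      Finset.measurable_sum _ fun i _ => hme i.castSucc
    have hs2 : Measurable fun x : Fin (m+1) → ℝ => ∑ i ∈ Finset.Iic k, x i.castSucc :=
      Finset.measurable_sum _ fun i _ => hme i.castSucc
    rw [hAdef, Set.setOf_and]
    exact MeasurableSet.inter (measurableSet_le hs1 (hme (Fin.last m)))
      (measurableSet_lt (hme (Fin.last m)) hs2)
  have hev : {ω | (∑ i ∈ Finset.Iio k, X i ω) ≤ Y ω ∧ Y ω < ∑ i ∈ Finset.Iic k, X i ω}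
      = (fun ω i => (Fin.snoc X Y : Fin (m + 1) → Ω → ℝ) i ω) ⁻¹' A := by
    ext ω
    simp [hAdef, Fin.snoc_castSucc, Fin.snoc_last]
  rw [hev, ← Measure.map_apply (measurable_pi_iff.2 hXY) hAmeas, hmap]
  -- split off the last coordinate
  set B : Set (ℝ × (Fin m → ℝ)) :=
    {p | (∑ i ∈ Finset.Iio k, p.2 i) ≤ p.1 ∧ p.1 < ∑ i ∈ Finset.Iic k, p.2 i} with hBdef
  have hBmeas : MeasurableSet B := by
    have hme2 : ∀ i : Fin m, Measurable fun p : ℝ × (Fin m → ℝ) => p.2 i :=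
      fun i => measurable_snd.eval
    have hp1 : Measurable fun p : ℝ × (Fin m → ℝ) => ∑ i ∈ Finset.Iio k, p.2 i :=
      Finset.measurable_sum _ fun i _ => hme2 i
    have hp2 : Measurable fun p : ℝ × (Fin m → ℝ) => ∑ i ∈ Finset.Iic k, p.2 i :=
      Finset.measurable_sum _ fun i _ => hme2 i
    rw [hBdef, Set.setOf_and]
    exact MeasurableSet.inter (measurableSet_le hp1 measurable_fst)
      (measurableSet_lt measurable_fst hp2)
  have hApre : A = (MeasurableEquiv.piFinSuccAbove (fun _ => ℝ) (Fin.last m)) ⁻¹' B := by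
    ext x
    simp [hAdef, hBdef, MeasurableEquiv.piFinSuccAbove_apply, Fin.removeNth, Fin.init, Fin.succAbove_last]
  have hpres := measurePreserving_piFinSuccAbove ν (Fin.last m)
  rw [hApre, hpres.measure_preimage hBmeas.nullMeasurableSet]
  have h1 : ν (Fin.last m) = expMeasure μ := by simp [hν]
  have h2 : (fun j : Fin m => ν ((Fin.last m).succAbove j)) = fun j => expMeasure (lam j) := by
    funext j; simp [hν, Fin.succAbove_last]
  rw [h1, h2]
  set Q : Measure (Fin m → ℝ) := Measure.pi fun j => expMeasure (lam j) with hQ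
  -- swap coordinates
  have hswap := Measure.measurePreserving_swap (μ := Q) (ν := expMeasure μ)
  have hsw : ((expMeasure μ).prod Q) B = (Q.prod (expMeasure μ)) (Prod.swap ⁻¹' B) :=
    (hswap.measure_preimage hBmeas.nullMeasurableSet).symm
  rw [hsw, Measure.prod_apply (hBmeas.preimage measurable_swap)]
  -- slices are Ico intervals
  have hslice : ∀ x : Fin m → ℝ, Prod.mk x ⁻¹' (Prod.swap ⁻¹' B)
      = Ico (∑ i ∈ Finset.Iio k, x i) (∑ i ∈ Finset.Iic k, x i) := by
    intro x; ext y; simp [hBdef, Set.mem_Ico]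
  -- a.e. nonnegativity of coordinates
  have hae : ∀ᵐ x ∂Q, ∀ i, 0 ≤ x i := by
    rw [MeasureTheory.ae_all_iff]
    intro i
    rw [ae_iff]
    have hset : {x : Fin m → ℝ | ¬ 0 ≤ x i} = Function.eval i ⁻¹' (Iio 0) := by
      ext x; simp [not_le]
    rw [hQ, hset]
    exact Measure.pi_eval_preimage_null _ (expMeasure_Iio_zero (lam i))
  have hIic : Finset.Iic k = insert k (Finset.Iio k) := (Finset.Iio_insert k).symm
  have hknot : k ∉ Finset.Iio k := by simp
  have hsums : ∀ x : Fin m → ℝ, (∀ i, 0 ≤ x i) →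
      0 ≤ ∑ i ∈ Finset.Iio k, x i ∧ (∑ i ∈ Finset.Iio k, x i) ≤ ∑ i ∈ Finset.Iic k, x i := by
    intro x hx
    constructor
    · exact Finset.sum_nonneg fun i _ => hx i
    · rw [hIic, Finset.sum_insert hknot]
      nlinarith [hx k]
  -- rewrite the integrand a.e.
  have hcongr : ∫⁻ x, expMeasure μ (Prod.mk x ⁻¹' (Prod.swap ⁻¹' B)) ∂Q
      = ∫⁻ x, (ENNReal.ofReal (exp (-(μ * ∑ i ∈ Finset.Iio k, x i)))
          - ENNReal.ofReal (exp (-(μ * ∑ i ∈ Finset.Iic k, x i)))) ∂Q := by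
    refine lintegral_congr_ae (hae.mono fun x hx => ?_)
    dsimp only
    rw [hslice x, expMeasure_Ico hμ (hsums x hx).1 (hsums x hx).2,
      ENNReal.ofReal_sub _ (exp_nonneg _)]
  rw [hcongr]
  -- compute the two integrals
  have hterm : ∀ s : Finset (Fin m),
      ∫⁻ x, ENNReal.ofReal (exp (-(μ * ∑ i ∈ s, x i))) ∂Q
        = ENNReal.ofReal (∏ i ∈ s, lam i / (lam i + μ)) := by
    intro s
    have hfun : ∀ x : Fin m → ℝ, ENNReal.ofReal (exp (-(μ * ∑ i ∈ s, x i)))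
        = ∏ i, (fun t => if i ∈ s then ENNReal.ofReal (exp (-(μ * t))) else 1) (x i) := by
      intro x
      simp only []
      rw [Finset.prod_ite_mem Finset.univ s (fun i => ENNReal.ofReal (exp (-(μ * x i)))),
        Finset.univ_inter]
      rw [← ENNReal.ofReal_prod_of_nonneg (fun i _ => exp_nonneg _), ← Real.exp_sum]
      congr 2
      rw [Finset.mul_sum, ← Finset.sum_neg_distrib]
    have hmeasf : ∀ i : Fin m,
        Measurable (fun t : ℝ => if i ∈ s then ENNReal.ofReal (exp (-(μ * t))) else 1) := by
      intro i; split <;> fun_prop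
    have haux := lintegral_pi_prod_aux m (fun j => expMeasure (lam j)) (fun j => inferInstance)
      (fun i => fun t => if i ∈ s then ENNReal.ofReal (exp (-(μ * t))) else 1) hmeasf
    simp_rw [hfun]
    rw [hQ]
    rw [show (∫⁻ x : Fin m → ℝ, ∏ i, (fun t => if i ∈ s then ENNReal.ofReal (exp (-(μ * t))) else 1) (x i) ∂Measure.pi fun j => expMeasure (lam j)) = _ from haux]
    have hone : ∀ i : Fin m, ∫⁻ t, (if i ∈ s then ENNReal.ofReal (exp (-(μ * t))) else 1)
        ∂expMeasure (lam i) = if i ∈ s then ENNReal.ofReal (lam i / (lam i + μ)) else 1 := by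
      intro i
      by_cases h : i ∈ s
      · simp only [h, if_true]
        exact lintegral_exp_neg_expMeasure (hlam i) hμ
      · simp [h]
    simp_rw [hone]
    rw [Finset.prod_ite_mem Finset.univ s, Finset.univ_inter,
      ← ENNReal.ofReal_prod_of_nonneg (fun i _ => le_of_lt (div_pos (hlam i) (by linarith [hlam i])))]
  have hsub : ∫⁻ x, (ENNReal.ofReal (exp (-(μ * ∑ i ∈ Finset.Iio k, x i)))
          - ENNReal.ofReal (exp (-(μ * ∑ i ∈ Finset.Iic k, x i)))) ∂Q
      = ENNReal.ofReal (∏ i ∈ Finset.Iio k, lam i / (lam i + μ))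
        - ENNReal.ofReal (∏ i ∈ Finset.Iic k, lam i / (lam i + μ)) := by
    rw [← hterm (Finset.Iio k), ← hterm (Finset.Iic k)]
    refine lintegral_sub ?_ ?_ ?_
    · have : Measurable (fun x : Fin m → ℝ => ∑ i ∈ Finset.Iic k, x i) :=
        Finset.measurable_sum _ fun i _ => measurable_pi_apply _
      fun_prop
    · rw [hterm (Finset.Iic k)]; exact ENNReal.ofReal_ne_top
    · refine hae.mono fun x hx => ?_
      apply ENNReal.ofReal_le_ofReal
      apply Real.exp_le_exp.2
      have := (hsums x hx).2
      nlinarith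
  rw [hsub]
  have hprodnn : 0 ≤ ∏ i ∈ Finset.Iic k, lam i / (lam i + μ) :=
    Finset.prod_nonneg fun i _ => le_of_lt (div_pos (hlam i) (by linarith [hlam i]))
  rw [← ENNReal.ofReal_sub _ hprodnn]
  congr 1
  rw [hIic, Finset.prod_insert hknot]
  have h1k : (1 : ℝ) - lam k / (lam k + μ) = μ / (lam k + μ) := by
    have hk0 : lam k + μ ≠ 0 := ne_of_gt (by linarith [hlam k])
    field_simp
    ring
  have hring : ∏ i ∈ Finset.Iio k, lam i / (lam i + μ)
        - lam k / (lam k + μ) * ∏ i ∈ Finset.Iio k, lam i / (lam i + μ)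
      = (1 - lam k / (lam k + μ)) * ∏ i ∈ Finset.Iio k, lam i / (lam i + μ) := by ring
  rw [hring, h1k]
end

section
/- Fix an integer n ≥ 2 and define a sequence λ : ℤ → ℕ by λ(t) = 1 for all t ≤ 0 and λ(t+1) = λ(t) + λ(2t − n + 1) for all t with 0 ≤ t < n − 1. Define F : ℕ → ℕ by F(1) = 1 and F(m) = F(m−1) + F(⌊m/2⌋) for m ≥ 2. Then λ(n−1) = F(n). -/
/-- The Fibonacci-like sequence `F(1) = 1`, `F(m) = F(m-1) + F(⌊m/2⌋)` for `m ≥ 2`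
(OEIS A033485); the value at `0` is junk. -/
def fibKK : ℕ → ℕ
  | 0 => 0
  | 1 => 1
  | (m + 2) => fibKK (m + 1) + fibKK ((m + 2) / 2)
decreasing_by all_goals omega

lemma fibKK_one : fibKK 1 = 1 := by rw [fibKK]

lemma fibKK_rec (k : ℕ) (hk : 2 ≤ k) : fibKK k = fibKK (k - 1) + fibKK (k / 2) := by
  obtain ⟨a, rfl⟩ : ∃ a, k = a + 2 := ⟨k - 2, by omega⟩
  rw [fibKK]
  norm_num

/-- Number of paths from `x` under moves `x ↦ x+1`, `x ↦ 2x+1`, stopping upon `x ≥ n`. -/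
def pathP (n : ℕ) : ℕ → ℕ := fun x =>
  if n ≤ x then 1 else pathP n (x + 1) + pathP n (2 * x + 1)
termination_by x => n - x
decreasing_by all_goals omega

/-- Number of increasing paths from `x` to exactly `m` under the same moves. -/
def pathC (m : ℕ) : ℕ → ℕ := fun x =>
  if m ≤ x then (if x = m then 1 else 0) else pathC m (x + 1) + pathC m (2 * x + 1)
termination_by x => m - x
decreasing_by all_goals omega

lemma pathP_of_ge {n x : ℕ} (h : n ≤ x) : pathP n x = 1 := by
  rw [pathP]; simp [h]

lemma pathP_rec {n x : ℕ} (h : x < n) : pathP n x = pathP n (x + 1) + pathP n (2 * x + 1) := by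
  rw [pathP]; simp [Nat.not_le.mpr h]

lemma pathC_of_gt {m x : ℕ} (h : m < x) : pathC m x = 0 := by
  rw [pathC]; simp [Nat.le_of_lt h, Nat.ne_of_gt h]

lemma pathC_self (m : ℕ) : pathC m m = 1 := by
  rw [pathC]; simp

lemma pathC_rec {m x : ℕ} (h : x < m) : pathC m x = pathC m (x + 1) + pathC m (2 * x + 1) := by
  rw [pathC]; simp [Nat.not_le.mpr h]

/-- Splitting lemma: raising the threshold from `n-1` to `n` adds the paths ending
exactly at `n-1`. -/
lemma pathP_split (n : ℕ) (hn : 1 ≤ n) :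
    ∀ k x, n - x ≤ k → pathP n x = pathP (n - 1) x + pathC (n - 1) x := by
  intro k
  induction k with
  | zero =>
    intro x hx
    rw [pathP_of_ge (show n ≤ x by omega), pathP_of_ge (show n - 1 ≤ x by omega),
      pathC_of_gt (show n - 1 < x by omega)]
  | succ k ih =>
    intro x hx
    by_cases h1 : n ≤ x
    · rw [pathP_of_ge h1, pathP_of_ge (show n - 1 ≤ x by omega),
        pathC_of_gt (show n - 1 < x by omega)]
    · push_neg at h1
      rw [pathP_rec h1, ih (x + 1) (by omega), ih (2 * x + 1) (by omega)]
      by_cases h2 : x = n - 1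
      · subst h2
        rw [pathP_of_ge (le_refl (n - 1)), pathC_self,
          pathP_of_ge (show n - 1 ≤ n - 1 + 1 by omega),
          pathC_of_gt (show n - 1 < n - 1 + 1 by omega),
          pathP_of_ge (show n - 1 ≤ 2 * (n - 1) + 1 by omega),
          pathC_of_gt (show n - 1 < 2 * (n - 1) + 1 by omega)]
      · have h3 : x < n - 1 := by omega
        rw [pathC_rec h3, pathP_rec h3]
        ring

/-- Backward recursion for the exact-hit counts. -/
lemma pathC_back (m : ℕ) (hm : 2 ≤ m) :
    ∀ k x, m - x ≤ k → x ≤ m - 1 →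
      pathC m x = pathC (m - 1) x + (if m % 2 = 1 then pathC ((m - 1) / 2) x else 0) := by
  intro k
  induction k with
  | zero => intro x hx hx'; omega
  | succ k ih =>
    intro x hx hx'
    by_cases h1 : x = m - 1
    · subst h1
      rw [pathC_rec (show m - 1 < m by omega),
        show m - 1 + 1 = m by omega, pathC_self,
        pathC_of_gt (show m < 2 * (m - 1) + 1 by omega), pathC_self]
      by_cases hodd : m % 2 = 1
      · rw [if_pos hodd, pathC_of_gt (show (m - 1) / 2 < m - 1 by omega)]
      · rw [if_neg hodd]
    · have h3 : x < m - 1 := by omega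
      rw [pathC_rec (show x < m by omega), ih (x + 1) (by omega) (by omega),
        pathC_rec (show x < m - 1 from h3)]
      by_cases h4 : 2 * x + 1 < m
      · -- both children below threshold
        rw [ih (2 * x + 1) (by omega) (by omega)]
        by_cases hodd : m % 2 = 1
        · rw [if_pos hodd, if_pos hodd, if_pos hodd,
            pathC_rec (show x < (m - 1) / 2 by omega)]
          ring
        · simp only [if_neg hodd]; ring
      · by_cases h5 : 2 * x + 1 = m
        · -- hit exactly m; m is odd and x = (m-1)/2
          have hodd : m % 2 = 1 := by omega
          have hx2 : x = (m - 1) / 2 := by omega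
          rw [h5, pathC_self, pathC_of_gt (show m - 1 < m by omega),
            if_pos hodd, if_pos hodd, hx2, pathC_self,
            pathC_of_gt (show (m - 1) / 2 < (m - 1) / 2 + 1 by omega)]
        · -- overshoot
          have h6 : m < 2 * x + 1 := by omega
          rw [pathC_of_gt h6, pathC_of_gt (show m - 1 < 2 * x + 1 by omega)]
          by_cases hodd : m % 2 = 1
          · simp only [if_pos hodd]
            rw [pathC_of_gt (show (m - 1) / 2 < x by omega),
              pathC_of_gt (show (m - 1) / 2 < x + 1 by omega)]
          · simp only [if_neg hodd]

/-- `pathC m 1 = fibKK ((m+1)/2)`. -/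
lemma pathC_one (m : ℕ) (hm : 1 ≤ m) : pathC m 1 = fibKK ((m + 1) / 2) := by
  induction m using Nat.strong_induction_on with
  | _ m ih =>
    by_cases hm1 : m = 1
    · subst hm1; rw [pathC_self, show (1 + 1) / 2 = 1 from rfl, fibKK_one]
    · have hm2 : 2 ≤ m := by omega
      rw [pathC_back m hm2 m 1 (by omega) (by omega),
        ih (m - 1) (by omega) (by omega), show (m - 1 + 1) / 2 = m / 2 by omega]
      by_cases hodd : m % 2 = 1
      · rw [if_pos hodd, ih ((m - 1) / 2) (by omega) (by omega)]
        rw [fibKK_rec ((m + 1) / 2) (by omega),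
          show (m + 1) / 2 - 1 = m / 2 by omega,
          show ((m - 1) / 2 + 1) / 2 = ((m + 1) / 2) / 2 by omega]
      · rw [if_neg hodd, add_zero, show (m + 1) / 2 = m / 2 by omega]

/-- `pathP n 1 = fibKK n`. -/
lemma pathP_one (n : ℕ) (hn : 1 ≤ n) : pathP n 1 = fibKK n := by
  induction n using Nat.strong_induction_on with
  | _ n ih =>
    by_cases hn1 : n = 1
    · subst hn1; rw [pathP_of_ge (le_refl 1), fibKK_one]
    · have hn2 : 2 ≤ n := by omega
      rw [pathP_split n (by omega) n 1 (by omega),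
        ih (n - 1) (by omega) (by omega), pathC_one (n - 1) (by omega),
        show (n - 1 + 1) / 2 = n / 2 by omega, fibKK_rec n hn2]

/-- Fix `n ≥ 2` and let `lam : ℤ → ℕ` satisfy `lam t = 1` for all
`t ≤ 0` and `lam (t+1) = lam t + lam (2t - n + 1)` for `0 ≤ t < n - 1`.
Then `lam (n-1) = F n` where `F` is the Fibonacci-like sequence A033485. -/
theorem lam_final_eq_fibKK (n : ℕ) (hn : 2 ≤ n) (lam : ℤ → ℕ)
    (h0 : ∀ t : ℤ, t ≤ 0 → lam t = 1)
    (hrec : ∀ t : ℤ, 0 ≤ t → t < (n : ℤ) - 1 → lam (t + 1) = lam t + lam (2 * t - n + 1)) :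
    lam ((n : ℤ) - 1) = fibKK n := by
  have key : ∀ t : ℕ, t ≤ n - 1 → lam (t : ℤ) = pathP n (n - t) := by
    intro t
    induction t using Nat.strong_induction_on with
    | _ t ih =>
      match t with
      | 0 =>
        intro _
        rw [show ((0 : ℕ) : ℤ) = 0 from rfl, h0 0 (le_refl _),
          pathP_of_ge (by omega)]
      | (t + 1) =>
        intro ht
        have hr := hrec (t : ℤ) (by positivity) (by
          have : (t : ℤ) < (n : ℤ) - 1 := by exact_mod_cast (by omega : (t:ℤ) + 1 ≤ (n:ℤ) - 1)
          exact this)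
        have harg : ((t : ℤ) + 1) = ((t + 1 : ℕ) : ℤ) := by omega
        rw [harg] at hr
        rw [hr, ih t (by omega) (by omega)]
        rw [pathP_rec (show n - (t + 1) < n by omega)]
        have e1 : n - (t + 1) + 1 = n - t := by omega
        have e2 : 2 * (n - (t + 1)) + 1 = 2 * n - 2 * t - 1 := by omega
        rw [e1, e2]
        congr 1
        by_cases hneg : 2 * t + 1 ≤ n
        · rw [h0 _ (by omega), pathP_of_ge (by omega)]
        · have hs : ((2 * t + 1 - n : ℕ) : ℤ) = 2 * (t : ℤ) - n + 1 := by omega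
          rw [← hs, ih (2 * t + 1 - n) (by omega) (by omega)]
          congr 1
          omega
  have h1 : ((n : ℤ) - 1) = ((n - 1 : ℕ) : ℤ) := by omega
  rw [h1, key (n - 1) (le_refl _), show n - (n - 1) = 1 from by omega,
    pathP_one n (by omega)]
end

section
/- Let F be defined by F(1) = 1 and F(m) = F(m−1) + F(⌊m/2⌋) for m ≥ 2, and let g be the formal power series g(z) = Σ_{n≥1} F(n) zⁿ over ℚ. Then g satisfies the functional equation g(z)·(1 − z) = z + (1 + z)·g(z²), where g(z²) denotes the formal power series obtained by substituting z² for z in g. -/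
/-- The generating function `g(z) = Σ_{n ≥ 1} F(n) zⁿ` of the Fibonacci-like
sequence, as a formal power series over `ℚ` (the coefficient of `z⁰` is `F(0) = 0`). -/
noncomputable def genF : PowerSeries ℚ :=
  PowerSeries.mk fun n => (fibKK n : ℚ)

/-- The power series `g(z²)`, obtained from `genF` by substituting `z²` for `z`:
its `z^n`-coefficient is `F(n/2)` for even `n` and `0` for odd `n`. -/
noncomputable def genFsq : PowerSeries ℚ :=
  PowerSeries.mk fun n => if n % 2 = 0 then (fibKK (n / 2) : ℚ) else 0

/-- The generating function `g(z) = Σ_{n≥1} F(n) zⁿ` of the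
Fibonacci-like sequence A033485 satisfies the functional equation
`g(z)·(1 − z) = z + (1 + z)·g(z²)`. -/
theorem genF_functional_equation :
    genF * (1 - PowerSeries.X) = PowerSeries.X + (1 + PowerSeries.X) * genFsq := by
  have h : ∀ n, fibKK (n + 2) = fibKK (n + 1) + fibKK ((n + 2) / 2) := fun n => by
    rw [fibKK]
  rw [mul_sub, mul_one, add_mul, one_mul]
  ext n
  rcases n with _ | _ | n
  · simp [genF, genFsq, fibKK]
  · simp [genF, genFsq, fibKK, PowerSeries.coeff_succ_mul_X, PowerSeries.coeff_succ_X_mul]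
  · simp only [map_sub, map_add, PowerSeries.coeff_succ_mul_X, PowerSeries.coeff_succ_X_mul,
      PowerSeries.coeff_X, genF, genFsq, PowerSeries.coeff_mk]
    rcases Nat.even_or_odd n with ⟨k, hk⟩ | ⟨k, hk⟩
    · have hk' : n = 2*k := by omega
      clear hk; subst hk'
      have h1 : (2*k+2) % 2 = 0 := by omega
      have h2 : (2*k+1) % 2 = 1 := by omega
      have h3 : (2*k+2)/2 = k+1 := by omega
      rw [h (2*k)]
      push_cast
      simp [h1, h2, h3]
    · have hk' : n = 2*k+1 := by omega
      clear hk; subst hk'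
      have h1 : (2*k+1+2) % 2 = 1 := by omega
      have h2 : (2*k+1+1) % 2 = 0 := by omega
      have h3 : (2*k+1+2)/2 = k+1 := by omega
      have h4 : (2*k+2)/2 = k+1 := by omega
      rw [h (2*k+1)]
      push_cast
      simp [h1, h2, h3, h4]
end

section
/- Let F be defined by F(1) = 1 and F(m) = F(m−1) + F(⌊m/2⌋) for m ≥ 2. Then for every real (or complex) z with |z| < 1, the series Σ_{n≥1} F(n) zⁿ converges, the infinite product ∏_{k≥0} (1 − z^{2^k}) converges to a nonzero limit, and Σ_{n≥1} F(n) zⁿ = (1/2) · ( 1/((1 − z) · ∏_{k≥0} (1 − z^{2^k})) − 1 ). -/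
lemma fibKK_bound {r : ℝ} (hr : 1 < r) : ∃ C : ℝ, 0 < C ∧ ∀ n, (fibKK n : ℝ) ≤ C * r ^ n := by
  obtain ⟨K, hK⟩ : ∃ K : ℕ, 1 / (r - 1) < r ^ K := pow_unbounded_of_one_lt _ hr
  have hr0 : (0:ℝ) < r := lt_trans one_pos hr
  have hr1 : (0:ℝ) < r - 1 := by linarith
  have hKr : (1:ℝ) ≤ r ^ K * (r - 1) := by
    rw [div_lt_iff₀ hr1] at hK
    nlinarith
  set M := 2 * K + 2 with hM
  set C := (∑ m ∈ Finset.range (M + 1), (fibKK m : ℝ)) + 1 with hC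
  have hCpos : 0 < C := by
    have : (0:ℝ) ≤ ∑ m ∈ Finset.range (M + 1), (fibKK m : ℝ) :=
      Finset.sum_nonneg fun i _ => by positivity
    linarith
  have hCm : ∀ m, m ≤ M → (fibKK m : ℝ) ≤ C := by
    intro m hm
    have : (fibKK m : ℝ) ≤ ∑ m ∈ Finset.range (M + 1), (fibKK m : ℝ) :=
      Finset.single_le_sum (f := fun i => (fibKK i : ℝ)) (fun i _ => by positivity)
        (Finset.mem_range.2 (by omega))
    linarith
  refine ⟨C, hCpos, ?_⟩
  intro n
  induction n using Nat.strong_induction_on with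
  | _ n ih =>
    by_cases hn : n ≤ M
    · calc (fibKK n : ℝ) ≤ C := hCm n hn
        _ ≤ C * r ^ n := le_mul_of_one_le_right hCpos.le (one_le_pow₀ hr.le)
    · push_neg at hn
      obtain ⟨m, rfl⟩ : ∃ m, n = m + 2 := ⟨n - 2, by omega⟩
      have h1 := ih (m + 1) (by omega)
      have h2 := ih ((m + 2) / 2) (by omega)
      have hq : (m + 2) / 2 + K ≤ m + 1 := by omega
      have hpow : r ^ ((m + 2) / 2) * (r ^ K * (r - 1)) ≤ r ^ (m + 1) * (r - 1) := by
        rw [← mul_assoc, ← pow_add]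
        apply mul_le_mul_of_nonneg_right (pow_le_pow_right₀ hr.le hq) hr1.le
      have hkey : r ^ (m + 1) + r ^ ((m + 2) / 2) ≤ r ^ (m + 2) := by
        have h3 : r ^ ((m + 2) / 2) * 1 ≤ r ^ ((m + 2) / 2) * (r ^ K * (r - 1)) := by
          apply mul_le_mul_of_nonneg_left hKr (by positivity)
        have h4 : r ^ (m + 2) = r ^ (m + 1) * r := by ring
        nlinarith
      rw [fibKK]
      push_cast
      nlinarith [mul_le_mul_of_nonneg_left hkey hCpos.le]

lemma fibKK_shift_summable {x : ℝ} (hx0 : 0 ≤ x) (hx : x < 1) (j : ℕ) :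
    Summable (fun n : ℕ => (fibKK (n + j) : ℝ) * x ^ n) := by
  set r : ℝ := 2 / (1 + x) with hrdef
  have hr : 1 < r := by
    rw [hrdef, lt_div_iff₀ (by linarith)]
    linarith
  have hrx : r * x < 1 := by
    rw [hrdef, div_mul_eq_mul_div, div_lt_iff₀ (by linarith)]
    linarith
  have hrx0 : 0 ≤ r * x := by positivity
  obtain ⟨C, hC, hbound⟩ := fibKK_bound hr
  refine Summable.of_nonneg_of_le (f := fun n => (C * r ^ j) * (r * x) ^ n) ?_ ?_ ?_
  · intro n; positivity
  · intro n
    have := hbound (n + j)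
    have hxn : (0:ℝ) ≤ x ^ n := by positivity
    calc (fibKK (n + j) : ℝ) * x ^ n ≤ (C * r ^ (n + j)) * x ^ n := by
          apply mul_le_mul_of_nonneg_right this hxn
      _ = (C * r ^ j) * (r * x) ^ n := by rw [pow_add, mul_pow]; ring
  · exact (summable_geometric_of_lt_one hrx0 hrx).mul_left _

lemma fibKK_norm_summable {z : ℂ} (hz : ‖z‖ < 1) :
    Summable (fun n : ℕ => ‖(fibKK n : ℂ) * z ^ n‖) := by
  have := fibKK_shift_summable (norm_nonneg z) hz 0
  apply this.congr
  intro n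
  simp [norm_mul, norm_pow, Complex.norm_natCast]

lemma fibKK_summable {z : ℂ} (hz : ‖z‖ < 1) :
    Summable (fun n : ℕ => (fibKK n : ℂ) * z ^ n) :=
  Summable.of_norm (fibKK_norm_summable hz)

set_option maxHeartbeats 1000000 in
lemma fibKK_funcEq {z : ℂ} (hz : ‖z‖ < 1) :
    (1 - z) * ∑' n : ℕ, (fibKK n : ℂ) * z ^ n =
      z + (1 + z) * ∑' n : ℕ, (fibKK n : ℂ) * (z ^ 2) ^ n := by
  have hz2 : ‖z ^ 2‖ < 1 := by
    rw [norm_pow]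
    exact pow_lt_one₀ (norm_nonneg z) hz two_ne_zero
  have hs := fibKK_summable hz
  have hs2 := fibKK_summable hz2
  have hs1 : Summable (fun n : ℕ => (fibKK (n + 1) : ℂ) * z ^ (n + 1)) :=
    (summable_nat_add_iff 1).2 hs
  have hzs : Summable (fun n : ℕ => (fibKK n : ℂ) * z ^ (n + 1)) :=
    (hs.mul_left z).congr fun n => by ring
  have hd : Summable (fun n : ℕ => ((fibKK (n + 1) : ℂ) - (fibKK n : ℂ)) * z ^ (n + 1)) :=
    (hs1.sub hzs).congr fun n => by ring
  have he : Summable (fun k : ℕ => (fibKK (k + 1) : ℂ) * (z ^ 2) ^ (k + 1)) :=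
    (summable_nat_add_iff 1).2 hs2
  have ho : Summable (fun k : ℕ => z * ((fibKK (k + 1) : ℂ) * (z ^ 2) ^ (k + 1))) :=
    he.mul_left z
  have e1 : ∑' n : ℕ, (fibKK n : ℂ) * z ^ n = ∑' n : ℕ, (fibKK (n + 1) : ℂ) * z ^ (n + 1) := by
    rw [Summable.tsum_eq_zero_add hs]
    norm_num [fibKK]
  have e2 : ∑' n : ℕ, (fibKK n : ℂ) * (z ^ 2) ^ n
      = ∑' n : ℕ, (fibKK (n + 1) : ℂ) * (z ^ 2) ^ (n + 1) := by
    rw [Summable.tsum_eq_zero_add hs2]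
    norm_num [fibKK]
  have e3 : (1 - z) * ∑' n : ℕ, (fibKK n : ℂ) * z ^ n
      = ∑' n : ℕ, ((fibKK (n + 1) : ℂ) - (fibKK n : ℂ)) * z ^ (n + 1) := by
    rw [sub_mul, one_mul]
    nth_rewrite 1 [e1]
    rw [← tsum_mul_left, ← Summable.tsum_sub hs1 ((hs.mul_left z).congr fun n => rfl)]
    exact tsum_congr fun n => by ring
  -- replace coefficients using the recurrence
  have e4 : ∀ n : ℕ, ((fibKK (n + 1 + 1) : ℂ) - (fibKK (n + 1) : ℂ)) * z ^ (n + 1 + 1)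
      = (fibKK (n / 2 + 1) : ℂ) * z ^ (n + 2) := by
    intro n
    have h : fibKK (n + 2) = fibKK (n + 1) + fibKK (n / 2 + 1) := by
      have hdiv : (n + 2) / 2 = n / 2 + 1 := by omega
      rw [fibKK, hdiv]
    have h12 : n + 1 + 1 = n + 2 := rfl
    rw [h12, h]
    push_cast
    ring
  have hg : Summable (fun n : ℕ => (fibKK (n / 2 + 1) : ℂ) * z ^ (n + 2)) :=
    (((summable_nat_add_iff 1).2 hd).congr fun n => e4 n)
  have heq : ∀ k : ℕ, (fibKK ((2 * k) / 2 + 1) : ℂ) * z ^ (2 * k + 2)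
      = (fibKK (k + 1) : ℂ) * (z ^ 2) ^ (k + 1) := by
    intro k
    rw [Nat.mul_div_cancel_left k two_pos, show 2 * k + 2 = 2 * (k + 1) from by ring, pow_mul]
  have hoq : ∀ k : ℕ, (fibKK ((2 * k + 1) / 2 + 1) : ℂ) * z ^ (2 * k + 1 + 2)
      = z * ((fibKK (k + 1) : ℂ) * (z ^ 2) ^ (k + 1)) := by
    intro k
    have h1 : (2 * k + 1) / 2 = k := by omega
    have h2 : z ^ (2 * k + 1 + 2) = z * (z ^ 2) ^ (k + 1) := by
      rw [show 2 * k + 1 + 2 = 2 * (k + 1) + 1 from by ring, pow_succ', pow_mul]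
    rw [h1, h2]
    ring
  have e5 : ∑' n : ℕ, (fibKK (n / 2 + 1) : ℂ) * z ^ (n + 2)
      = (1 + z) * ∑' n : ℕ, (fibKK n : ℂ) * (z ^ 2) ^ n := by
    rw [← tsum_even_add_odd (f := fun n : ℕ => (fibKK (n / 2 + 1) : ℂ) * z ^ (n + 2))
      (he.congr fun k => (heq k).symm) (ho.congr fun k => (hoq k).symm)]
    have t1 : ∑' k : ℕ, (fibKK ((2 * k) / 2 + 1) : ℂ) * z ^ (2 * k + 2)
        = ∑' n : ℕ, (fibKK n : ℂ) * (z ^ 2) ^ n := by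
      rw [e2]
      exact tsum_congr fun k => heq k
    have t2 : ∑' k : ℕ, (fibKK ((2 * k + 1) / 2 + 1) : ℂ) * z ^ (2 * k + 1 + 2)
        = z * ∑' n : ℕ, (fibKK n : ℂ) * (z ^ 2) ^ n := by
      rw [e2, ← tsum_mul_left]
      exact tsum_congr fun k => hoq k
    rw [t1, t2]
    ring
  rw [e3, Summable.tsum_eq_zero_add hd]
  have e6 : ∑' n : ℕ, ((fibKK (n + 1 + 1) : ℂ) - (fibKK (n + 1) : ℂ)) * z ^ (n + 1 + 1)
      = ∑' n : ℕ, (fibKK (n / 2 + 1) : ℂ) * z ^ (n + 2) :=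
    tsum_congr fun n => e4 n
  rw [e6, e5]
  norm_num [fibKK]
lemma fibKK_multipliable {z : ℂ} (hz : ‖z‖ < 1) :
    Multipliable (fun k : ℕ => 1 - z ^ 2 ^ k) := by
  have key : ∀ (x : {w : ℂ // ‖w‖ < 1}) (k : ℕ), ‖(x : ℂ) ^ 2 ^ k‖ < 1 := by
    intro x k
    rw [norm_pow]
    exact pow_lt_one₀ (norm_nonneg _) x.2 (Nat.pos_of_ne_zero (by positivity)).ne'
  exact (fun (f : ℕ → {w : ℂ // ‖w‖ < 1} → ℂ) (_ : ∀ x n, f n x ≠ 0)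
      (hf : ∀ x, Summable fun n => Complex.log (f n x)) (a : {w : ℂ // ‖w‖ < 1}) =>
      Complex.multipliable_of_summable_log (hf a))
    (fun k w => 1 - (w : ℂ) ^ 2 ^ k)
    (fun x k => by
      intro h
      have h1 : (x : ℂ) ^ 2 ^ k = 1 := by
        have := sub_eq_zero.1 h
        exact this.symm
      have := key x k
      rw [h1] at this
      simp at this)
    (fun x => by
      have hx : ‖(x : ℂ)‖ < 1 := x.2
      set s : ℝ := ‖(x : ℂ)‖ with hs
      have hs0 : 0 ≤ s := norm_nonneg _
      set M : ℝ := s * (1 - s)⁻¹ / 2 + 1 with hM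
      have hM0 : 0 < M := by
        have : 0 < (1 - s)⁻¹ := by
          apply inv_pos.2
          linarith
        positivity
      apply Summable.of_norm
      refine Summable.of_nonneg_of_le (f := fun k => M * s ^ k)
        (fun k => norm_nonneg _) (fun k => ?_) ?_
      · have hk : ‖-((x : ℂ) ^ 2 ^ k)‖ < 1 := by
          rw [norm_neg]
          exact key x k
        have hlog := Complex.norm_log_one_add_le hk
        have hre : (1 : ℂ) + -((x : ℂ) ^ 2 ^ k) = 1 - (x : ℂ) ^ 2 ^ k := by ring
        rw [hre] at hlog
        set t : ℝ := ‖-((x : ℂ) ^ 2 ^ k)‖ with ht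
        have ht0 : 0 ≤ t := norm_nonneg _
        have hts : t ≤ s := by
          rw [ht, norm_neg, norm_pow]
          calc s ^ 2 ^ k ≤ s ^ 1 := pow_le_pow_of_le_one hs0 hx.le (Nat.one_le_two_pow)
            _ = s := pow_one s
        have htk : t ≤ s ^ k := by
          rw [ht, norm_neg, norm_pow]
          exact pow_le_pow_of_le_one hs0 hx.le (Nat.lt_two_pow_self (n := k)).le
        have hinv : (1 - t)⁻¹ ≤ (1 - s)⁻¹ := by
          apply inv_anti₀ (by linarith)
          linarith
        have hsk0 : 0 ≤ s ^ k := by positivity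
        calc ‖Complex.log (1 - (x : ℂ) ^ 2 ^ k)‖ ≤ t ^ 2 * (1 - t)⁻¹ / 2 + t := hlog
          _ ≤ t * (s * (1 - s)⁻¹) / 2 + t := by
              have h1 : t ^ 2 * (1 - t)⁻¹ ≤ t * (s * (1 - s)⁻¹) := by
                have : t * t ≤ t * s := mul_le_mul_of_nonneg_left hts ht0
                have h2 : (0:ℝ) ≤ (1 - s)⁻¹ := by
                  apply inv_nonneg.2; linarith
                nlinarith [mul_le_mul_of_nonneg_right hinv (mul_nonneg ht0 ht0)]
              linarith
          _ = t * M := by rw [hM]; ring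
          _ ≤ s ^ k * M := mul_le_mul_of_nonneg_right htk hM0.le
          _ = M * s ^ k := by ring
      · exact (summable_geometric_of_lt_one hs0 hx).mul_left M)
    ⟨z, hz⟩

lemma fibKK_tsum_bound {z w : ℂ} (hz : ‖z‖ < 1) (hw : ‖w‖ ≤ ‖z‖) :
    ‖∑' n : ℕ, (fibKK n : ℂ) * w ^ n‖ ≤
      ‖w‖ * ∑' n : ℕ, (fibKK (n + 1) : ℝ) * ‖z‖ ^ n := by
  have hw1 : ‖w‖ < 1 := lt_of_le_of_lt hw hz
  have hns := fibKK_norm_summable hw1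
  have hr : Summable (fun n : ℕ => (fibKK n : ℝ) * ‖w‖ ^ n) :=
    (fibKK_shift_summable (norm_nonneg w) hw1 0).congr fun n => by norm_num
  have hr1 : Summable (fun n : ℕ => (fibKK (n + 1) : ℝ) * ‖w‖ ^ (n + 1)) :=
    ((fibKK_shift_summable (norm_nonneg w) hw1 1).mul_left ‖w‖).congr fun n => by ring
  have hrz : Summable (fun n : ℕ => ‖w‖ * ((fibKK (n + 1) : ℝ) * ‖z‖ ^ n)) :=
    (fibKK_shift_summable (norm_nonneg z) hz 1).mul_left ‖w‖
  calc ‖∑' n : ℕ, (fibKK n : ℂ) * w ^ n‖ ≤ ∑' n : ℕ, ‖(fibKK n : ℂ) * w ^ n‖ :=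
        norm_tsum_le_tsum_norm hns
    _ = ∑' n : ℕ, (fibKK n : ℝ) * ‖w‖ ^ n := tsum_congr fun n => by
        rw [norm_mul, norm_pow, Complex.norm_natCast]
    _ = ∑' n : ℕ, (fibKK (n + 1) : ℝ) * ‖w‖ ^ (n + 1) := by
        rw [Summable.tsum_eq_zero_add hr]
        norm_num [fibKK]
    _ ≤ ∑' n : ℕ, ‖w‖ * ((fibKK (n + 1) : ℝ) * ‖z‖ ^ n) := by
        apply Summable.tsum_le_tsum ?_ hr1 hrz
        intro n
        have h1 : ‖w‖ ^ n ≤ ‖z‖ ^ n := pow_le_pow_left₀ (norm_nonneg w) hw n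
        have h2 : (0:ℝ) ≤ (fibKK (n + 1) : ℝ) := by positivity
        calc (fibKK (n + 1) : ℝ) * ‖w‖ ^ (n + 1)
            = ‖w‖ * ((fibKK (n + 1) : ℝ) * ‖w‖ ^ n) := by ring
          _ ≤ ‖w‖ * ((fibKK (n + 1) : ℝ) * ‖z‖ ^ n) := by
              apply mul_le_mul_of_nonneg_left _ (norm_nonneg w)
              exact mul_le_mul_of_nonneg_left h1 h2
    _ = ‖w‖ * ∑' n : ℕ, (fibKK (n + 1) : ℝ) * ‖z‖ ^ n := tsum_mul_left

lemma fibKK_tele {z : ℂ} (hz : ‖z‖ < 1) (N : ℕ) :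
    (1 - z) * (∏ k ∈ Finset.range N, (1 - z ^ 2 ^ k)) *
      (1 + 2 * ∑' n : ℕ, (fibKK n : ℂ) * z ^ n)
    = (1 - z ^ 2 ^ N) * (1 + 2 * ∑' n : ℕ, (fibKK n : ℂ) * (z ^ 2 ^ N) ^ n) := by
  induction N with
  | zero => simp
  | succ N ih =>
    have hw : ‖z ^ 2 ^ N‖ < 1 := by
      rw [norm_pow]
      exact pow_lt_one₀ (norm_nonneg z) hz (Nat.pos_of_ne_zero (by positivity)).ne'
    have hfe := fibKK_funcEq hw
    have hH : (1 - z ^ 2 ^ N) * (1 + 2 * ∑' n : ℕ, (fibKK n : ℂ) * (z ^ 2 ^ N) ^ n)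
        = (1 + z ^ 2 ^ N) * (1 + 2 * ∑' n : ℕ, (fibKK n : ℂ) * ((z ^ 2 ^ N) ^ 2) ^ n) := by
      linear_combination 2 * hfe
    have hsq : (z ^ 2 ^ N) ^ 2 = z ^ 2 ^ (N + 1) := by
      rw [← pow_mul, ← pow_succ]
    rw [Finset.prod_range_succ]
    calc (1 - z) * ((∏ k ∈ Finset.range N, (1 - z ^ 2 ^ k)) * (1 - z ^ 2 ^ N)) *
          (1 + 2 * ∑' n : ℕ, (fibKK n : ℂ) * z ^ n)
        = ((1 - z) * (∏ k ∈ Finset.range N, (1 - z ^ 2 ^ k)) *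
            (1 + 2 * ∑' n : ℕ, (fibKK n : ℂ) * z ^ n)) * (1 - z ^ 2 ^ N) := by ring
      _ = ((1 - z ^ 2 ^ N) * (1 + 2 * ∑' n : ℕ, (fibKK n : ℂ) * (z ^ 2 ^ N) ^ n))
            * (1 - z ^ 2 ^ N) := by rw [ih]
      _ = ((1 + z ^ 2 ^ N) * (1 + 2 * ∑' n : ℕ, (fibKK n : ℂ) * ((z ^ 2 ^ N) ^ 2) ^ n))
            * (1 - z ^ 2 ^ N) := by rw [hH]
      _ = (1 - (z ^ 2 ^ N) ^ 2) *
            (1 + 2 * ∑' n : ℕ, (fibKK n : ℂ) * ((z ^ 2 ^ N) ^ 2) ^ n) := by ring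
      _ = (1 - z ^ 2 ^ (N + 1)) *
            (1 + 2 * ∑' n : ℕ, (fibKK n : ℂ) * (z ^ 2 ^ (N + 1)) ^ n) := by rw [hsq]
/-- For every complex `z` with `|z| < 1` the generating series
`Σ_{n≥1} F(n) zⁿ` of the Fibonacci-like sequence A033485 converges, the infinite
product `∏_{k≥0} (1 − z^{2^k})` converges to a nonzero limit, and
`Σ_{n≥1} F(n) zⁿ = (1/2)·(1/((1 − z)·∏_{k≥0}(1 − z^{2^k})) − 1)`. -/
theorem genF_closed_form (z : ℂ) (hz : ‖z‖ < 1) :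
    Summable (fun n : ℕ => (fibKK n : ℂ) * z ^ n) ∧
    Multipliable (fun k : ℕ => 1 - z ^ (2 ^ k)) ∧
    (∏' k : ℕ, (1 - z ^ (2 ^ k))) ≠ 0 ∧
    ∑' n : ℕ, (fibKK n : ℂ) * z ^ n =
      (1 / 2) * (1 / ((1 - z) * ∏' k : ℕ, (1 - z ^ (2 ^ k))) - 1) := by
  have hs := fibKK_summable hz
  have hm := fibKK_multipliable hz
  have hwlim : Filter.Tendsto (fun N : ℕ => z ^ 2 ^ N) Filter.atTop (nhds 0) := by
    rw [tendsto_zero_iff_norm_tendsto_zero]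
    apply squeeze_zero (fun N => norm_nonneg _) (fun N => ?_)
      (tendsto_pow_atTop_nhds_zero_of_lt_one (norm_nonneg z) hz)
    rw [norm_pow]
    exact pow_le_pow_of_le_one (norm_nonneg z) hz.le (Nat.lt_two_pow_self (n := N)).le
  have hGlim : Filter.Tendsto (fun N : ℕ => ∑' n : ℕ, (fibKK n : ℂ) * (z ^ 2 ^ N) ^ n)
      Filter.atTop (nhds 0) := by
    rw [tendsto_zero_iff_norm_tendsto_zero]
    have hb : ∀ N : ℕ, ‖z ^ 2 ^ N‖ ≤ ‖z‖ := by
      intro N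
      rw [norm_pow]
      calc ‖z‖ ^ 2 ^ N ≤ ‖z‖ ^ 1 := pow_le_pow_of_le_one (norm_nonneg z) hz.le Nat.one_le_two_pow
        _ = ‖z‖ := pow_one _
    have htend : Filter.Tendsto
        (fun N : ℕ => ‖z ^ 2 ^ N‖ * ∑' n : ℕ, (fibKK (n + 1) : ℝ) * ‖z‖ ^ n)
        Filter.atTop (nhds 0) := by
      have := (tendsto_zero_iff_norm_tendsto_zero.1 hwlim).mul_const
        (∑' n : ℕ, (fibKK (n + 1) : ℝ) * ‖z‖ ^ n)
      simpa using this
    exact squeeze_zero (fun N => norm_nonneg _) (fun N => fibKK_tsum_bound hz (hb N)) htend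
  have hA : Filter.Tendsto
      (fun N : ℕ => (1 - z) * (∏ k ∈ Finset.range N, (1 - z ^ 2 ^ k)) *
        (1 + 2 * ∑' n : ℕ, (fibKK n : ℂ) * z ^ n)) Filter.atTop
      (nhds ((1 - z) * (∏' k : ℕ, (1 - z ^ 2 ^ k)) *
        (1 + 2 * ∑' n : ℕ, (fibKK n : ℂ) * z ^ n))) :=
    (hm.hasProd.tendsto_prod_nat.const_mul _).mul_const _
  have hB : Filter.Tendsto
      (fun N : ℕ => (1 - z ^ 2 ^ N) * (1 + 2 * ∑' n : ℕ, (fibKK n : ℂ) * (z ^ 2 ^ N) ^ n))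
      Filter.atTop (nhds 1) := by
    have := ((tendsto_const_nhds (x := (1:ℂ))).sub hwlim).mul
      ((tendsto_const_nhds (x := (1:ℂ))).add (hGlim.const_mul 2))
    simpa using this
  have heq : (1 - z) * (∏' k : ℕ, (1 - z ^ 2 ^ k)) *
      (1 + 2 * ∑' n : ℕ, (fibKK n : ℂ) * z ^ n) = 1 :=
    tendsto_nhds_unique (hA.congr fun N => fibKK_tele hz N) hB
  have hPne : (∏' k : ℕ, (1 - z ^ 2 ^ k)) ≠ 0 := by
    intro h
    rw [h] at heq
    simp at heq
  have hzne : (1 - z) ≠ 0 := by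
    intro h
    rw [h] at heq
    simp at heq
  refine ⟨hs, hm, hPne, ?_⟩
  have hne : (1 - z) * (∏' k : ℕ, (1 - z ^ 2 ^ k)) ≠ 0 := mul_ne_zero hzne hPne
  field_simp
  linear_combination heq
end

section
/- Fix a real number n > 0. For each integer k ≥ 0 define γ_k : ℝ → ℝ by γ_k(s) = Σ_{j=0}^{k} (n^j / (j! · 2^{j(j−1)/2})) · (2^{j−1} s − 2^{j−1} + 1)^j. Then γ₀(s) = 1 for all s, and for every k ≥ 0 and every real s, γ_{k+1}(s) = γ_k(1 − 2^{−k}) + n · ∫_{1−2^{−k}}^{s} γ_k(2ξ − 1) dξ. -/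
open scoped Nat

/-- The `j`-th term of `γ_k`. -/
noncomputable def gammaTerm (n : ℝ) (j : ℕ) (x : ℝ) : ℝ :=
  n ^ j / ((j ! : ℝ) * 2 ^ (j * (j - 1) / 2)) *
    ((2 : ℝ) ^ (j - 1) * x - (2 : ℝ) ^ (j - 1) + 1) ^ j

lemma gammaTerm_zero (n : ℝ) (x : ℝ) : gammaTerm n 0 x = 1 := by
  simp [gammaTerm]

lemma integ_pow_aux (m : ℕ) (c d a b : ℝ) (hc : c ≠ 0) :
    ∫ ξ in a..b, (c * ξ + d) ^ m
      = ((c * b + d) ^ (m + 1) - (c * a + d) ^ (m + 1)) / (c * (m + 1)) := by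
  have h := intervalIntegral.integral_comp_mul_add (a := a) (b := b)
    (fun x : ℝ => x ^ m) hc d
  rw [h, integral_pow, smul_eq_mul]
  have hm : ((m : ℝ) + 1) ≠ 0 := by positivity
  field_simp

lemma gammaTerm_tri (j : ℕ) : (j + 1) * j / 2 = j * (j - 1) / 2 + j := by
  have h : (j + 1) * j = j * (j - 1) + 2 * j := by
    cases j with
    | zero => rfl
    | succ m => simp [Nat.succ_sub_one]; ring
  rw [h, Nat.add_mul_div_left _ _ (by norm_num : 0 < 2)]

lemma gammaTerm_integral (n : ℝ) (j : ℕ) (a s : ℝ) (hn : n ≠ 0) :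
    n * ∫ ξ in a..s, gammaTerm n j (2 * ξ - 1)
      = gammaTerm n (j + 1) s - gammaTerm n (j + 1) a := by
  have harg : ∀ x : ℝ, gammaTerm n j (2 * x - 1)
      = n ^ j / ((j ! : ℝ) * 2 ^ (j * (j - 1) / 2)) *
        ((2 : ℝ) ^ j * x + (1 - (2 : ℝ) ^ j)) ^ j := by
    intro x
    cases j with
    | zero => simp [gammaTerm]
    | succ m =>
      simp only [gammaTerm, Nat.add_sub_cancel]
      have : (2 : ℝ) ^ m * (2 * x - 1) - 2 ^ m + 1
          = (2 : ℝ) ^ (m + 1) * x + (1 - 2 ^ (m + 1)) := by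
        rw [pow_succ]; ring
      rw [this]
  simp only [harg]
  rw [intervalIntegral.integral_const_mul,
    integ_pow_aux j ((2 : ℝ) ^ j) (1 - (2 : ℝ) ^ j) a s (by positivity)]
  simp only [gammaTerm, Nat.add_sub_cancel]
  have hfac : ((j + 1)! : ℝ) = (j + 1) * (j ! : ℝ) := by
    rw [Nat.factorial_succ]; push_cast; ring
  have hpow : (2 : ℝ) ^ ((j + 1) * j / 2)
      = 2 ^ (j * (j - 1) / 2) * 2 ^ j := by
    rw [← pow_add, gammaTerm_tri]
  have hb : ∀ x : ℝ, (2 : ℝ) ^ j * x + (1 - (2 : ℝ) ^ j)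
      = (2 : ℝ) ^ j * x - 2 ^ j + 1 := by intro x; ring
  rw [hfac, hpow, hb s, hb a]
  have h2 : (2 : ℝ) ^ j ≠ 0 := by positivity
  have hj : ((j : ℝ) + 1) ≠ 0 := by positivity
  have hjf : (j ! : ℝ) ≠ 0 := by positivity
  have ht : (2 : ℝ) ^ (j * (j - 1) / 2) ≠ 0 := by positivity
  field_simp
  ring

/-- Fix a real `n > 0` and for `k ≥ 0` let
`γ_k(s) = Σ_{j=0}^{k} (n^j / (j!·2^{j(j−1)/2})) · (2^{j−1} s − 2^{j−1} + 1)^j`.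
Then `γ₀ ≡ 1` and `γ_{k+1}(s) = γ_k(1 − 2^{−k}) + n·∫_{1−2^{−k}}^{s} γ_k(2ξ − 1) dξ`. -/
theorem gammaK_recursion (n : ℝ) (hn : 0 < n) (γ : ℕ → ℝ → ℝ)
    (hγ : ∀ k s, γ k s = ∑ j ∈ Finset.range (k + 1),
      n ^ j / ((j ! : ℝ) * 2 ^ (j * (j - 1) / 2)) *
        ((2 : ℝ) ^ (j - 1) * s - (2 : ℝ) ^ (j - 1) + 1) ^ j) :
    (∀ s : ℝ, γ 0 s = 1) ∧
    ∀ (k : ℕ) (s : ℝ),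
      γ (k + 1) s = γ k (1 - (2 : ℝ) ^ (-(k : ℤ))) +
        n * ∫ ξ in (1 - (2 : ℝ) ^ (-(k : ℤ)))..s, γ k (2 * ξ - 1) := by
  have hγF : ∀ m x, γ m x = ∑ j ∈ Finset.range (m + 1), gammaTerm n j x := hγ
  refine ⟨fun s => by rw [hγF]; simp [gammaTerm_zero], ?_⟩
  intro k s
  set a : ℝ := 1 - (2 : ℝ) ^ (-(k : ℤ)) with ha
  have hFcont : ∀ j : ℕ, Continuous (fun ξ : ℝ => gammaTerm n j (2 * ξ - 1)) := by
    intro j; unfold gammaTerm; fun_prop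
  have hsum : (∫ ξ in a..s, γ k (2 * ξ - 1))
      = ∑ j ∈ Finset.range (k + 1), ∫ ξ in a..s, gammaTerm n j (2 * ξ - 1) := by
    rw [← intervalIntegral.integral_finset_sum]
    · apply intervalIntegral.integral_congr
      intro ξ _
      exact hγF k (2 * ξ - 1)
    · intro j _
      exact (hFcont j).intervalIntegrable _ _
  have hmain : n * ∫ ξ in a..s, γ k (2 * ξ - 1) = γ (k + 1) s - γ (k + 1) a := by
    rw [hsum, Finset.mul_sum]
    have := fun j => gammaTerm_integral n j a s hn.ne'
    simp_rw [this]
    rw [Finset.sum_sub_distrib, hγF (k + 1) s, hγF (k + 1) a,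
      Finset.sum_range_succ' _ (k + 1), Finset.sum_range_succ' _ (k + 1)]
    simp only [gammaTerm_zero]
    ring
  have hzero : γ (k + 1) a = γ k a := by
    rw [hγF (k + 1), hγF k, Finset.sum_range_succ]
    have h2 : (2 : ℝ) ^ k * (2 : ℝ) ^ (-(k : ℤ)) = 1 := by
      rw [← zpow_natCast (2 : ℝ) k, ← zpow_add₀ (two_ne_zero)]
      simp
    have hb : (2 : ℝ) ^ k * a - 2 ^ k + 1 = 0 := by
      rw [ha, mul_sub, mul_one, h2]; ring
    have : gammaTerm n (k + 1) a = 0 := by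
      simp only [gammaTerm, Nat.add_sub_cancel, hb]
      simp
    rw [this, add_zero]
  rw [hmain, hzero]
  ring
end

section
/- Fix a real number n > 0. For each integer k ≥ 0 define γ_k : ℝ → ℝ by γ_k(s) = Σ_{j=0}^{k} (n^j / (j! · 2^{j(j−1)/2})) · (2^{j−1} s − 2^{j−1} + 1)^j. Then lim_{k→∞} γ_k(1 − 2^{−k}) = Σ_{j=0}^{∞} n^j / (j! · 2^{j(j−1)/2}), where the series on the right converges. -/
open scoped Nat
open Filter

/-- Fix a real `n > 0` and for `k ≥ 0` let
`γ_k(s) = Σ_{j=0}^{k} (n^j / (j!·2^{j(j−1)/2})) · (2^{j−1} s − 2^{j−1} + 1)^j`.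
Then the series `Σ_{j≥0} n^j / (j!·2^{j(j−1)/2})` converges and
`γ_k(1 − 2^{−k}) → Σ_{j=0}^{∞} n^j / (j!·2^{j(j−1)/2})` as `k → ∞`. -/
theorem gammaK_tendsto_series (n : ℝ) (hn : 0 < n) (γ : ℕ → ℝ → ℝ)
    (hγ : ∀ k s, γ k s = ∑ j ∈ Finset.range (k + 1),
      n ^ j / ((j ! : ℝ) * 2 ^ (j * (j - 1) / 2)) *
        ((2 : ℝ) ^ (j - 1) * s - (2 : ℝ) ^ (j - 1) + 1) ^ j) :
    Summable (fun j : ℕ => n ^ j / ((j ! : ℝ) * 2 ^ (j * (j - 1) / 2))) ∧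
    Tendsto (fun k : ℕ => γ k (1 - (2 : ℝ) ^ (-(k : ℤ)))) atTop
      (nhds (∑' j : ℕ, n ^ j / ((j ! : ℝ) * 2 ^ (j * (j - 1) / 2)))) := by
  set a : ℕ → ℝ := fun j => n ^ j / ((j ! : ℝ) * 2 ^ (j * (j - 1) / 2)) with ha
  have ha_nonneg : ∀ j, 0 ≤ a j := by
    intro j
    apply div_nonneg (le_of_lt (pow_pos hn j))
    positivity
  have ha_le : ∀ j, a j ≤ n ^ j / (j ! : ℝ) := by
    intro j
    apply div_le_div_of_nonneg_left (le_of_lt (pow_pos hn j)) (by positivity)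
    have h1 : (1 : ℝ) ≤ 2 ^ (j * (j - 1) / 2) := one_le_pow₀ (by norm_num : (1:ℝ) ≤ 2)
    nlinarith [(Nat.cast_pos (α := ℝ)).2 (Nat.factorial_pos j)]
  have hsum : Summable a :=
    (Real.summable_pow_div_factorial n).of_nonneg_of_le ha_nonneg ha_le
  refine ⟨hsum, ?_⟩
  -- the terms as a doubly-indexed family
  set f : ℕ → ℕ → ℝ := fun k j =>
    if j ≤ k then a j * (1 - 2 ^ (j - 1) * (2 : ℝ) ^ (-(k : ℤ))) ^ j else 0 with hf
  have h2k : ∀ k : ℕ, (2 : ℝ) ^ (-(k : ℤ)) = (2⁻¹ : ℝ) ^ k := by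
    intro k
    rw [zpow_neg, zpow_natCast, ← inv_pow]
  have hpos : ∀ k : ℕ, 0 < (2 : ℝ) ^ (-(k : ℤ)) := fun k => zpow_pos (by norm_num) _
  -- value of γ at the special point
  have hval : ∀ k, γ k (1 - (2 : ℝ) ^ (-(k : ℤ))) = ∑' j, f k j := by
    intro k
    rw [tsum_eq_sum (s := Finset.range (k + 1)) (by
      intro j hj
      simp only [Finset.mem_range, not_lt] at hj
      simp only [hf]
      exact if_neg (by omega))]
    rw [hγ]
    apply Finset.sum_congr rfl
    intro j hj
    simp only [Finset.mem_range] at hj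
    simp only [hf, if_pos (by omega : j ≤ k), ha]
    ring_nf
  -- limits termwise
  have hlim0 : Tendsto (fun k : ℕ => (2 : ℝ) ^ (-(k : ℤ))) atTop (nhds 0) := by
    simp only [h2k]
    exact tendsto_pow_atTop_nhds_zero_of_lt_one (by norm_num) (by norm_num)
  have hab : ∀ j : ℕ, Tendsto (fun k => f k j) atTop (nhds (a j)) := by
    intro j
    have h1 : Tendsto (fun k : ℕ => a j * (1 - 2 ^ (j - 1) * (2 : ℝ) ^ (-(k : ℤ))) ^ j)
        atTop (nhds (a j * (1 - 2 ^ (j - 1) * 0) ^ j)) := by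
      exact (((hlim0.const_mul _).const_sub 1).pow j).const_mul _
    simp only [mul_zero, sub_zero, one_pow, mul_one] at h1
    apply h1.congr'
    filter_upwards [eventually_ge_atTop j] with k hk
    simp [hf, hk]
  -- uniform bound
  have h_bound : ∀ k j, ‖f k j‖ ≤ a j := by
    intro k j
    by_cases hjk : j ≤ k
    · simp only [hf, if_pos hjk]
      have hb0 : (0 : ℝ) ≤ 1 - 2 ^ (j - 1) * (2 : ℝ) ^ (-(k : ℤ)) := by
        have : (2 : ℝ) ^ (j - 1) * (2 : ℝ) ^ (-(k : ℤ)) ≤ 1 := by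
          rw [h2k, inv_pow, mul_inv_le_iff₀ (by positivity), one_mul]
          exact pow_le_pow_right₀ (by norm_num) (by omega)
        linarith
      have hb1 : 1 - 2 ^ (j - 1) * (2 : ℝ) ^ (-(k : ℤ)) ≤ 1 := by
        have := mul_pos (pow_pos (by norm_num : (0:ℝ) < 2) (j - 1)) (hpos k)
        linarith
      rw [Real.norm_eq_abs, abs_mul, abs_of_nonneg (ha_nonneg j),
        abs_of_nonneg (pow_nonneg hb0 j)]
      calc a j * (1 - 2 ^ (j - 1) * (2 : ℝ) ^ (-(k : ℤ))) ^ j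
          ≤ a j * 1 ^ j := by
            exact mul_le_mul_of_nonneg_left (pow_le_pow_left₀ hb0 hb1 j) (ha_nonneg j)
        _ = a j := by ring
    · simp [hf, hjk, ha_nonneg j]
  have := tendsto_tsum_of_dominated_convergence (f := f) (g := a) (𝓕 := atTop)
    hsum hab (Eventually.of_forall h_bound)
  simpa only [← hval] using this
end

section
/- Let f(x) = Σ_{j=0}^{∞} x^j / (j! · 2^{j(j−1)/2}). Then lim_{n→∞} (ln f(n)) / (ln n)² = 1/(2 ln 2), where the limit is taken as the real variable n tends to infinity. -/
open scoped Nat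
open Filter

private lemma key_nat (j M : ℕ) : j * M ≤ j * (j - 1) / 2 + M * (M + 1) / 2 := by
  obtain ⟨a, ha⟩ : 2 ∣ j * (j - 1) := by
    rcases Nat.eq_zero_or_pos j with h | h
    · simp [h]
    · obtain ⟨i, rfl⟩ := Nat.exists_eq_add_of_le h
      have : Even ((1 + i) * (1 + i - 1)) := by
        simpa [Nat.add_sub_cancel_left, mul_comm, Nat.add_comm] using Nat.even_mul_succ_self i
      exact this.two_dvd
  obtain ⟨b, hb⟩ : 2 ∣ M * (M + 1) := (Nat.even_mul_succ_self M).two_dvd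
  have hkey : 2 * (j * M) ≤ j * (j - 1) + M * (M + 1) := by
    rcases Nat.eq_zero_or_pos j with h | h
    · simp [h]
    · zify [h]
      have h1 : ((j : ℤ) - 1 - M) ^ 2 + ((j : ℤ) - 1 - M) ≥ 0 := by
        rcases le_or_gt 0 ((j : ℤ) - 1 - M) with h2 | h2
        · nlinarith
        · nlinarith
      nlinarith
  omega

private lemma summable_f (x : ℝ) :
    Summable (fun j : ℕ => x ^ j / ((j ! : ℝ) * 2 ^ (j * (j - 1) / 2))) := by
  apply Summable.of_norm_bounded (Real.summable_pow_div_factorial |x|)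
  intro j
  have hden : (0:ℝ) < (j ! : ℝ) * 2 ^ (j * (j - 1) / 2) := by positivity
  rw [norm_div, norm_pow, Real.norm_eq_abs, Real.norm_eq_abs, abs_of_pos hden]
  have hfac : (0:ℝ) < (j ! : ℝ) := by positivity
  have : (j ! : ℝ) ≤ (j ! : ℝ) * 2 ^ (j * (j - 1) / 2) := by
    nlinarith [one_le_pow₀ (by norm_num : (1:ℝ) ≤ 2) (n := j * (j - 1) / 2)]
  exact div_le_div_of_nonneg_left (by positivity) hfac this

private lemma f_upper (x : ℝ) (hx : 0 ≤ x) (M : ℕ) (hxM : x ≤ 2 ^ M) :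
    (∑' j : ℕ, x ^ j / ((j ! : ℝ) * 2 ^ (j * (j - 1) / 2)))
      ≤ 2 ^ (M * (M + 1) / 2) * Real.exp 1 := by
  have hsum2 : Summable (fun j : ℕ => (2:ℝ) ^ (M * (M + 1) / 2) * ((x / 2 ^ M) ^ j / j !)) :=
    (Real.summable_pow_div_factorial _).mul_left _
  have h1 : ∀ j : ℕ, x ^ j / ((j ! : ℝ) * 2 ^ (j * (j - 1) / 2))
      ≤ (2:ℝ) ^ (M * (M + 1) / 2) * ((x / 2 ^ M) ^ j / j !) := by
    intro j
    have hd1 : (0:ℝ) < (j ! : ℝ) * 2 ^ (j * (j - 1) / 2) := by positivity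
    have hd2 : (0:ℝ) < (2 ^ M : ℝ) ^ j * (j ! : ℝ) := by positivity
    have heq : (2:ℝ) ^ (M * (M + 1) / 2) * ((x / 2 ^ M) ^ j / j !)
        = 2 ^ (M * (M + 1) / 2) * x ^ j / ((2 ^ M : ℝ) ^ j * (j ! : ℝ)) := by
      rw [div_pow]; ring
    rw [heq, div_le_div_iff₀ hd1 hd2]
    have hpow : ((2:ℝ) ^ M) ^ j = 2 ^ (M * j) := by rw [← pow_mul]
    have hkey : (2:ℝ) ^ (M * j) ≤ 2 ^ (j * (j - 1) / 2 + M * (M + 1) / 2) := by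
      apply pow_le_pow_right₀ (by norm_num)
      rw [mul_comm]; exact key_nat j M
    calc x ^ j * ((2 ^ M : ℝ) ^ j * (j ! : ℝ))
        = x ^ j * (j ! : ℝ) * 2 ^ (M * j) := by rw [hpow]; ring
      _ ≤ x ^ j * (j ! : ℝ) * 2 ^ (j * (j - 1) / 2 + M * (M + 1) / 2) := by
          have : (0:ℝ) ≤ x ^ j * (j ! : ℝ) := by positivity
          exact mul_le_mul_of_nonneg_left hkey this
      _ = 2 ^ (M * (M + 1) / 2) * x ^ j * ((j ! : ℝ) * 2 ^ (j * (j - 1) / 2)) := by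
          rw [pow_add]; ring
  calc (∑' j : ℕ, x ^ j / ((j ! : ℝ) * 2 ^ (j * (j - 1) / 2)))
      ≤ ∑' j : ℕ, (2:ℝ) ^ (M * (M + 1) / 2) * ((x / 2 ^ M) ^ j / j !) :=
        Summable.tsum_le_tsum h1 (summable_f x) hsum2
    _ = (2:ℝ) ^ (M * (M + 1) / 2) * ∑' j : ℕ, ((x / 2 ^ M) ^ j / j !) := tsum_mul_left
    _ = (2:ℝ) ^ (M * (M + 1) / 2) * Real.exp (x / 2 ^ M) := by
        rw [Real.exp_eq_exp_ℝ, NormedSpace.exp_eq_tsum_div]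
    _ ≤ (2:ℝ) ^ (M * (M + 1) / 2) * Real.exp 1 := by
        have h2 : x / 2 ^ M ≤ 1 := div_le_one_of_le₀ hxM (by positivity)
        have := Real.exp_le_exp.mpr h2
        nlinarith [pow_pos (by norm_num : (0:ℝ) < 2) (M * (M + 1) / 2)]

private lemma f_lower (x : ℝ) (hx : 0 ≤ x) (m : ℕ) :
    x ^ m / ((m ! : ℝ) * 2 ^ (m * (m - 1) / 2))
      ≤ ∑' j : ℕ, x ^ j / ((j ! : ℝ) * 2 ^ (j * (j - 1) / 2)) :=
  Summable.le_tsum (summable_f x) m (fun j _ => by positivity)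

set_option maxHeartbeats 1000000 in
/-- For `f(x) = Σ_{j≥0} x^j / (j!·2^{j(j−1)/2})` one has
`(ln f(n)) / (ln n)² → 1/(2 ln 2)` as the real variable `n → ∞`. -/
theorem log_f_div_sq_log_tendsto (f : ℝ → ℝ)
    (hf : ∀ x, f x = ∑' j : ℕ, x ^ j / ((j ! : ℝ) * 2 ^ (j * (j - 1) / 2))) :
    Tendsto (fun n : ℝ => Real.log (f n) / (Real.log n) ^ 2) atTop
      (nhds (1 / (2 * Real.log 2))) := by
  simp only [hf]
  set c : ℝ := Real.log 2 with hcdef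
  have hc : 0 < c := Real.log_pos one_lt_two
  have hchalf : (1:ℝ)/2 < c := by
    rw [hcdef]; nlinarith [Real.log_two_gt_d9]
  have hlog : Tendsto Real.log atTop atTop := Real.tendsto_log_atTop
  -- the key little-o fact
  have hB0 : Tendsto (fun x : ℝ => Real.log (2 * Real.log x) / Real.log x) atTop (nhds 0) := by
    have t1 : Tendsto (fun x : ℝ => c / Real.log x) atTop (nhds 0) := by
      simpa [div_eq_mul_inv] using (hlog.inv_tendsto_atTop).const_mul c
    have t2 : Tendsto (fun x : ℝ => Real.log (Real.log x) / Real.log x) atTop (nhds 0) := by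
      have h := Real.isLittleO_log_id_atTop.tendsto_div_nhds_zero
      simpa [Function.comp_def] using h.comp hlog
    have := t1.add t2
    rw [add_zero] at this
    apply this.congr'
    filter_upwards [eventually_gt_atTop 1] with x hx
    have hL : (0:ℝ) < Real.log x := Real.log_pos hx
    rw [Real.log_mul two_ne_zero hL.ne', add_div]
  -- upper comparison function tends to the limit
  have hUp : Tendsto (fun x : ℝ => 1/(2*c) + (3/2) / Real.log x + (c+1) / (Real.log x)^2)
      atTop (nhds (1/(2*c))) := by
    have t1 : Tendsto (fun x : ℝ => (3/2 : ℝ) / Real.log x) atTop (nhds 0) := by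
      simpa [div_eq_mul_inv] using (hlog.inv_tendsto_atTop).const_mul (3/2 : ℝ)
    have t2 : Tendsto (fun x : ℝ => (c+1) / (Real.log x)^2) atTop (nhds 0) := by
      have hsq : Tendsto (fun x : ℝ => (Real.log x)^2) atTop atTop :=
        (tendsto_pow_atTop two_ne_zero).comp hlog
      simpa [div_eq_mul_inv] using (hsq.inv_tendsto_atTop).const_mul (c+1)
    have := (tendsto_const_nhds (x := 1/(2*c)) (f := atTop)).add t1 |>.add t2
    simpa using this
  -- lower comparison function tends to the limit
  have hLow : Tendsto (fun x : ℝ =>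
      (Real.log x / c - 1) * (Real.log x / 2 - Real.log (2 * Real.log x)) / (Real.log x)^2)
      atTop (nhds (1/(2*c))) := by
    have hA : Tendsto (fun x : ℝ => (Real.log x / c - 1) / Real.log x) atTop (nhds (1/c)) := by
      have h' : Tendsto (fun x : ℝ => 1 / Real.log x) atTop (nhds 0) := by
        simpa [div_eq_mul_inv] using (hlog.inv_tendsto_atTop).const_mul (1:ℝ)
      have base : Tendsto (fun x : ℝ => 1/c - 1/Real.log x) atTop (nhds (1/c)) := by
        simpa using (tendsto_const_nhds (x := 1/c) (f := atTop)).sub h'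
      apply base.congr'
      filter_upwards [eventually_gt_atTop 1] with x hx
      have hL : (0:ℝ) < Real.log x := Real.log_pos hx
      field_simp
    have hB : Tendsto (fun x : ℝ => (Real.log x / 2 - Real.log (2 * Real.log x)) / Real.log x)
        atTop (nhds (1/2)) := by
      have base : Tendsto (fun x : ℝ => 1/2 - Real.log (2 * Real.log x) / Real.log x)
          atTop (nhds (1/2)) := by
        simpa using (tendsto_const_nhds (x := (1/2:ℝ)) (f := atTop)).sub hB0
      apply base.congr'
      filter_upwards [eventually_gt_atTop 1] with x hx
      have hL : (0:ℝ) < Real.log x := Real.log_pos hx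
      field_simp
    have hprod := hA.mul hB
    have heq : (1/c) * (1/2) = 1/(2*c) := by rw [one_div_mul_one_div]; ring_nf
    rw [heq] at hprod
    apply hprod.congr
    intro x
    rw [div_mul_div_comm, ← sq]
  -- eventually the factor in the lower bound is nonnegative
  have hhalf : ∀ᶠ x : ℝ in atTop, Real.log (2 * Real.log x) ≤ Real.log x / 2 := by
    have h1 : ∀ᶠ x : ℝ in atTop,
        Real.log (2 * Real.log x) / Real.log x < 1/2 :=
      hB0.eventually (Filter.Tendsto.eventually_lt_const (by norm_num) tendsto_id) |>.mono
        (fun x hx => hx)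
    filter_upwards [h1, eventually_gt_atTop 1] with x hx hx1
    have hL : (0:ℝ) < Real.log x := Real.log_pos hx1
    have := (div_lt_iff₀ hL).mp hx
    linarith
  apply tendsto_of_tendsto_of_tendsto_of_le_of_le' hLow hUp
  · -- lower eventual bound
    filter_upwards [eventually_ge_atTop 2, hhalf] with x hx2 hhx
    have hx0 : (0:ℝ) < x := by linarith
    have hL : c ≤ Real.log x := Real.log_le_log two_pos hx2
    have hLpos : 0 < Real.log x := lt_of_lt_of_le hc hL
    set L : ℝ := Real.log x with hLdef
    set m : ℕ := ⌊L / c⌋₊ with hmdef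
    have hfloor : (m:ℝ) ≤ L / c := Nat.floor_le (by positivity)
    have hlt : L / c < m + 1 := Nat.lt_floor_add_one _
    have hm1 : 1 ≤ m := by
      apply Nat.le_floor
      rw [Nat.cast_one, le_div_iff₀ hc]
      linarith
    have hmpos : (0:ℝ) < (m:ℝ) := by exact_mod_cast Nat.pos_of_ne_zero (by omega)
    have hmc : (m:ℝ) * c ≤ L := by
      rw [← le_div_iff₀ hc]; exact hfloor
    have hm2L : (m:ℝ) ≤ 2 * L := by
      have : L / c ≤ 2 * L := by
        rw [div_le_iff₀ hc]; nlinarith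
      linarith
    -- the chosen term
    have hterm : x ^ m / ((m ! : ℝ) * 2 ^ (m * (m - 1) / 2))
        ≤ ∑' j : ℕ, x ^ j / ((j ! : ℝ) * 2 ^ (j * (j - 1) / 2)) :=
      f_lower x hx0.le m
    have htpos : (0:ℝ) < x ^ m / ((m ! : ℝ) * 2 ^ (m * (m - 1) / 2)) := by positivity
    have hlog1 : Real.log (x ^ m / ((m ! : ℝ) * 2 ^ (m * (m - 1) / 2)))
        ≤ Real.log (∑' j : ℕ, x ^ j / ((j ! : ℝ) * 2 ^ (j * (j - 1) / 2))) :=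
      Real.log_le_log htpos hterm
    have hlogterm : Real.log (x ^ m / ((m ! : ℝ) * 2 ^ (m * (m - 1) / 2)))
        = (m:ℝ) * L - (Real.log (m ! : ℝ) + (↑(m * (m - 1) / 2) : ℝ) * c) := by
      rw [Real.log_div (by positivity) (by positivity), Real.log_mul (by positivity)
        (by positivity), Real.log_pow, Real.log_pow]
    -- bound log (m!)
    have hfact : Real.log (m ! : ℝ) ≤ (m:ℝ) * Real.log (2 * L) := by
      have h1 : (m ! : ℝ) ≤ (m:ℝ) ^ m := by exact_mod_cast Nat.factorial_le_pow m
      have h2 : Real.log (m ! : ℝ) ≤ Real.log ((m:ℝ) ^ m) :=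
        Real.log_le_log (by positivity) h1
      rw [Real.log_pow] at h2
      have h3 : Real.log (m:ℝ) ≤ Real.log (2 * L) := Real.log_le_log hmpos hm2L
      calc Real.log (m ! : ℝ) ≤ (m:ℝ) * Real.log (m:ℝ) := h2
        _ ≤ (m:ℝ) * Real.log (2 * L) := by
            exact mul_le_mul_of_nonneg_left h3 hmpos.le
    -- bound binomial term
    have hbinom : (↑(m * (m - 1) / 2) : ℝ) * c ≤ (m:ℝ) * L / 2 := by
      have h1 : (↑(m * (m - 1) / 2) : ℝ) ≤ (↑(m * (m - 1)) : ℝ) / 2 := by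
        exact_mod_cast Nat.cast_div_le
      have h2 : (↑(m * (m - 1)) : ℝ) ≤ (m:ℝ) * (m:ℝ) := by
        have : m * (m - 1) ≤ m * m := Nat.mul_le_mul_left m (Nat.sub_le m 1)
        exact_mod_cast le_trans this (le_refl _)
      have h3 : (↑(m * (m - 1) / 2) : ℝ) * c ≤ ((m:ℝ) * (m:ℝ) / 2) * c := by
        apply mul_le_mul_of_nonneg_right _ hc.le
        linarith
      calc (↑(m * (m - 1) / 2) : ℝ) * c ≤ ((m:ℝ) * (m:ℝ) / 2) * c := h3
        _ = ((m:ℝ) / 2) * ((m:ℝ) * c) := by ring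
        _ ≤ ((m:ℝ) / 2) * L := by
            exact mul_le_mul_of_nonneg_left hmc (by positivity)
        _ = (m:ℝ) * L / 2 := by ring
    -- combine
    have hge : L / c - 1 ≤ (m:ℝ) := by linarith
    have hfac0 : 0 ≤ L / 2 - Real.log (2 * L) := by linarith [hhx]
    have hmain : (L / c - 1) * (L / 2 - Real.log (2 * L))
        ≤ Real.log (∑' j : ℕ, x ^ j / ((j ! : ℝ) * 2 ^ (j * (j - 1) / 2))) := by
      have step1 : (L / c - 1) * (L / 2 - Real.log (2 * L))
          ≤ (m:ℝ) * (L / 2 - Real.log (2 * L)) :=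
        mul_le_mul_of_nonneg_right hge hfac0
      have step2 : (m:ℝ) * (L / 2 - Real.log (2 * L))
          ≤ (m:ℝ) * L - (Real.log (m ! : ℝ) + (↑(m * (m - 1) / 2) : ℝ) * c) := by
        nlinarith
      rw [hlogterm] at hlog1
      linarith
    have hL2 : (0:ℝ) < L ^ 2 := by positivity
    exact (div_le_div_iff_of_pos_right hL2).mpr hmain
  · -- upper eventual bound
    filter_upwards [eventually_ge_atTop 2] with x hx2
    have hx0 : (0:ℝ) < x := by linarith
    have hL : c ≤ Real.log x := Real.log_le_log two_pos hx2
    have hLpos : 0 < Real.log x := lt_of_lt_of_le hc hL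
    set L : ℝ := Real.log x with hLdef
    set m : ℕ := ⌊L / c⌋₊ with hmdef
    have hfloor : (m:ℝ) ≤ L / c := Nat.floor_le (by positivity)
    have hlt : L / c < m + 1 := Nat.lt_floor_add_one _
    -- x ≤ 2 ^ (m + 1)
    have hxM : x ≤ 2 ^ (m + 1) := by
      have h1 : L < ((m:ℝ) + 1) * c := by
        rw [← div_lt_iff₀ hc] at *
        exact hlt
      have h2 : x = Real.exp L := (Real.exp_log hx0).symm
      have h3 : (2:ℝ) ^ (m + 1) = Real.exp (((m:ℝ) + 1) * c) := by
        rw [← Real.exp_log (show (0:ℝ) < 2 by norm_num)]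
        rw [← Real.exp_nat_mul]
        push_cast
        ring_nf
        rw [hcdef]
      rw [h2, h3]
      exact (Real.exp_le_exp.mpr h1.le)
    have hup := f_upper x hx0.le (m + 1) hxM
    -- tsum ≥ 1 (term j = 0)
    have hone : (1:ℝ) ≤ ∑' j : ℕ, x ^ j / ((j ! : ℝ) * 2 ^ (j * (j - 1) / 2)) := by
      have := f_lower x hx0.le 0
      simpa using this
    have hlogup : Real.log (∑' j : ℕ, x ^ j / ((j ! : ℝ) * 2 ^ (j * (j - 1) / 2)))
        ≤ (↑((m + 1) * (m + 1 + 1) / 2) : ℝ) * c + 1 := by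
      have h1 := Real.log_le_log (by linarith) hup
      rwa [Real.log_mul (by positivity) (Real.exp_pos 1).ne', Real.log_pow,
        Real.log_exp] at h1
    have hcast : (↑((m + 1) * (m + 1 + 1) / 2) : ℝ) ≤ ((m:ℝ) + 1) * ((m:ℝ) + 2) / 2 := by
      have h1 : (↑((m + 1) * (m + 1 + 1) / 2) : ℝ) ≤ (↑((m + 1) * (m + 1 + 1)) : ℝ) / 2 := by
        exact_mod_cast Nat.cast_div_le
      have h2 : (↑((m + 1) * (m + 1 + 1)) : ℝ) = ((m:ℝ) + 1) * ((m:ℝ) + 2) := by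
        push_cast; ring
      linarith
    have hM : ((m:ℝ) + 1) ≤ L / c + 1 := by linarith
    have hkey : Real.log (∑' j : ℕ, x ^ j / ((j ! : ℝ) * 2 ^ (j * (j - 1) / 2)))
        ≤ L ^ 2 / (2 * c) + (3/2) * L + (c + 1) := by
      have h1 : (↑((m + 1) * (m + 1 + 1) / 2) : ℝ) * c
          ≤ ((L / c + 1) * (L / c + 2) / 2) * c := by
        have h2 : ((m:ℝ) + 1) * ((m:ℝ) + 2) / 2 ≤ (L / c + 1) * (L / c + 2) / 2 := by
          have hm0 : (0:ℝ) ≤ (m:ℝ) := Nat.cast_nonneg m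
          gcongr
        exact mul_le_mul_of_nonneg_right (hcast.trans h2) hc.le
      have h3 : ((L / c + 1) * (L / c + 2) / 2) * c = L ^ 2 / (2 * c) + (3/2) * L + c := by
        field_simp
        ring
      linarith
    have hL2 : (0:ℝ) < L ^ 2 := by positivity
    have hfinal : (L ^ 2 / (2 * c) + (3/2) * L + (c + 1)) / L ^ 2
        = 1 / (2 * c) + (3/2) / L + (c + 1) / L ^ 2 := by
      field_simp
    calc Real.log (∑' j : ℕ, x ^ j / ((j ! : ℝ) * 2 ^ (j * (j - 1) / 2))) / L ^ 2
        ≤ (L ^ 2 / (2 * c) + (3/2) * L + (c + 1)) / L ^ 2 :=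
          (div_le_div_iff_of_pos_right hL2).mpr hkey
      _ = 1 / (2 * c) + (3/2) / L + (c + 1) / L ^ 2 := hfinal
end

section
/- Let F be defined by F(1) = 1 and F(m) = F(m−1) + F(⌊m/2⌋) for m ≥ 2. Then lim_{n→∞} (ln F(n)) / (ln n)² = 1/(2 ln 2). -/
open Filter

lemma fibKK_add_two (m : ℕ) : fibKK (m+2) = fibKK (m+1) + fibKK ((m+2)/2) := by
  rw [fibKK]

lemma fibKK_mono : Monotone fibKK := by
  apply monotone_nat_of_le_succ
  intro m
  match m with
  | 0 => simp [fibKK]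
  | 1 => simp [fibKK]
  | (k+2) => rw [show k+2+1 = (k+1)+2 from rfl, fibKK_add_two (k+1)]; exact Nat.le_add_right _ _

lemma fibKK_one_le {n : ℕ} (hn : 1 ≤ n) : 1 ≤ fibKK n := by
  have := fibKK_mono hn
  simpa [fibKK] using this

lemma fibKK_two_mul_add_two (x : ℕ) : fibKK (2*x+2) = fibKK (2*x+1) + fibKK (x+1) := by
  have h := fibKK_add_two (2*x)
  rw [show (2*x+2)/2 = x+1 by omega] at h
  exact h

lemma fibKK_two_mul_add_three (x : ℕ) : fibKK (2*x+3) = fibKK (2*x+2) + fibKK (x+1) := by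
  have h := fibKK_add_two (2*x+1)
  rw [show (2*x+1+2)/2 = x+1 by omega] at h
  rw [show 2*x+3 = 2*x+1+2 by omega]
  exact h

lemma fibKK_lower (d b : ℕ) : 2*d*fibKK (b+1) ≤ fibKK (2*(b+1+d)) := by
  induction d with
  | zero => simp
  | succ d ih =>
    have h2 : fibKK (2*(b+d)+2) = fibKK (2*(b+d)+1) + fibKK ((b+d)+1) :=
      fibKK_two_mul_add_two (b+d)
    have e1 : fibKK (2*((b+d)+1)+2) = fibKK (2*((b+d)+1)+1) + fibKK ((b+d)+2) :=
      fibKK_two_mul_add_two ((b+d)+1)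
    have e2 : fibKK (2*(b+d)+3) = fibKK (2*(b+d)+2) + fibKK ((b+d)+1) :=
      fibKK_two_mul_add_three (b+d)
    have m1 : fibKK (b+1) ≤ fibKK (b+d+1) := fibKK_mono (by omega)
    have m2 : fibKK (b+1) ≤ fibKK (b+d+2) := fibKK_mono (by omega)
    have r1 : 2*(b+1+d) = 2*(b+d)+2 := by ring
    have r2 : 2*(b+1+(d+1)) = 2*((b+d)+1)+2 := by ring
    have r3 : 2*((b+d)+1)+1 = 2*(b+d)+3 := by ring
    rw [r2, e1, r3, e2]
    rw [r1] at ih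
    have expand : 2*(d+1)*fibKK (b+1) = 2*d*fibKK (b+1) + 2*fibKK (b+1) := by ring
    omega

lemma fibKK_upper (n : ℕ) : fibKK (2*(n+1)) ≤ 2*(n+1)*fibKK (n+1) := by
  induction n with
  | zero => simp [fibKK]
  | succ n ih =>
    have e1 : fibKK (2*(n+1)+2) = fibKK (2*(n+1)+1) + fibKK ((n+1)+1) :=
      fibKK_two_mul_add_two (n+1)
    have e2 : fibKK (2*n+3) = fibKK (2*n+2) + fibKK (n+1) := fibKK_two_mul_add_three n
    have r3 : 2*(n+1)+1 = 2*n+3 := by ring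
    have r1 : 2*(n+1) = 2*n+2 := by ring
    have m1 : fibKK (n+1) ≤ fibKK (n+2) := fibKK_mono (by omega)
    have key : fibKK (2*(n+2)) = fibKK (2*(n+1)) + fibKK (n+1) + fibKK (n+2) := by
      rw [show 2*(n+2) = 2*(n+1)+2 by ring, e1, r3, e2, r1]
    rw [key]
    have : 2*(n+1)*fibKK (n+1) ≤ 2*(n+1)*fibKK (n+2) := Nat.mul_le_mul_left _ m1
    calc fibKK (2*(n+1)) + fibKK (n+1) + fibKK (n+2)
        ≤ 2*(n+1)*fibKK (n+1) + fibKK (n+1) + fibKK (n+2) := by omega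
      _ ≤ 2*(n+1)*fibKK (n+2) + fibKK (n+2) + fibKK (n+2) := by omega
      _ = 2*(n+2)*fibKK (n+2) := by ring

lemma fibKK_pow_le (K : ℕ) : fibKK (2^K) ≤ 2^(∑ j ∈ Finset.range K, (j+1)) := by
  induction K with
  | zero => simp [fibKK]
  | succ K ih =>
    have hpos : 1 ≤ 2^K := Nat.one_le_two_pow
    have h1 : fibKK (2*(2^K)) ≤ 2*(2^K) * fibKK (2^K) := by
      have h := fibKK_upper (2^K - 1)
      rw [show 2^K - 1 + 1 = 2^K by omega] at h
      exact h
    have h2 : 2^(K+1) = 2*2^K := by rw [pow_succ]; ring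
    rw [h2, Finset.sum_range_succ]
    calc fibKK (2*2^K) ≤ 2*2^K * fibKK (2^K) := h1
      _ ≤ 2*2^K * 2^(∑ j ∈ Finset.range K, (j+1)) := Nat.mul_le_mul_left _ ih
      _ = 2^(∑ j ∈ Finset.range K, (j+1) + (K+1)) := by rw [pow_add, pow_succ]; ring

def chainKK (p : ℕ) : ℕ → ℕ
  | 0 => 2*p
  | (k+1) => 2 * (chainKK p k + chainKK p k / p)

lemma chainKK_ge (p : ℕ) : ∀ k, 2*p ≤ chainKK p k := by
  intro k
  induction k with
  | zero => simp [chainKK]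
  | succ k ih =>
    show 2*p ≤ 2 * (chainKK p k + chainKK p k / p)
    have := Nat.zero_le (chainKK p k / p)
    generalize chainKK p k / p = q at *
    omega

lemma chainKK_div_ge (p : ℕ) (hp : 1 ≤ p) (k : ℕ) :
    chainKK p k ≤ 2*p*(chainKK p k / p) := by
  have h3 := chainKK_ge p k
  have hq2 : 2 ≤ chainKK p k / p := (Nat.le_div_iff_mul_le (by omega)).2 (by omega)
  have h1 := Nat.div_add_mod (chainKK p k) p
  have h2 : chainKK p k % p < p := Nat.mod_lt _ (by omega)
  have hpq : p*2 ≤ p*(chainKK p k / p) := Nat.mul_le_mul_left p hq2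
  have e : 2*p*(chainKK p k / p) = 2*(p*(chainKK p k / p)) := by ring
  rw [e]
  generalize p*(chainKK p k / p) = w at *
  generalize chainKK p k % p = r at *
  omega

lemma chainKK_succ_ge (p : ℕ) (hp : 1 ≤ p) (k : ℕ) :
    (2*p+1) * chainKK p k ≤ p * chainKK p (k+1) := by
  have h1 := chainKK_div_ge p hp k
  show (2*p+1) * chainKK p k ≤ p * (2 * (chainKK p k + chainKK p k / p))
  nlinarith [chainKK_ge p k]

lemma chainKK_succ_le (p : ℕ) (hp : 1 ≤ p) (k : ℕ) :
    p * chainKK p (k+1) ≤ (2*p+2) * chainKK p k := by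
  have h1 : (chainKK p k / p) * p ≤ chainKK p k := Nat.div_mul_le_self _ _
  show p * (2 * (chainKK p k + chainKK p k / p)) ≤ (2*p+2) * chainKK p k
  nlinarith

lemma chainKK_real_ge (p : ℕ) (hp : 1 ≤ p) (K : ℕ) :
    2*(p:ℝ) * ((2*p+1)/p)^K ≤ (chainKK p K : ℝ) := by
  have hp0 : (0:ℝ) < p := by positivity
  induction K with
  | zero => simp [chainKK]
  | succ K ih =>
    have h := chainKK_succ_ge p hp K
    have hc : ((2*p+1) * chainKK p K : ℝ) ≤ (p * chainKK p (K+1) : ℝ) := by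
      exact_mod_cast h
    push_cast at hc
    have hmu : (0:ℝ) ≤ (2*p+1)/p := by positivity
    calc 2*(p:ℝ) * ((2*p+1)/p)^(K+1) = ((2*p+1)/p) * (2*p * ((2*p+1)/p)^K) := by ring
      _ ≤ ((2*p+1)/p) * chainKK p K := by
          apply mul_le_mul_of_nonneg_left ih hmu
      _ ≤ chainKK p (K+1) := by
          rw [div_mul_eq_mul_div, div_le_iff₀ hp0]
          linarith

lemma chainKK_real_le (p : ℕ) (hp : 1 ≤ p) (K : ℕ) :
    (chainKK p K : ℝ) ≤ 2*(p:ℝ) * ((2*p+2)/p)^K := by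
  have hp0 : (0:ℝ) < p := by positivity
  induction K with
  | zero => simp [chainKK]
  | succ K ih =>
    have h := chainKK_succ_le p hp K
    have hc : ((p:ℝ) * chainKK p (K+1) : ℝ) ≤ ((2*p+2) * chainKK p K : ℝ) := by
      exact_mod_cast h
    have hK0 : (0:ℝ) ≤ chainKK p K := Nat.cast_nonneg _
    have hla : (0:ℝ) ≤ (2*(p:ℝ)+2)/p := by positivity
    calc (chainKK p (K+1) : ℝ) ≤ ((2*p+2)/p) * chainKK p K := by
          rw [div_mul_eq_mul_div, le_div_iff₀ hp0]
          push_cast at hc ⊢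
          linarith
      _ ≤ ((2*p+2)/p) * (2*(p:ℝ) * ((2*p+2)/p)^K) := by
          exact mul_le_mul_of_nonneg_left ih hla
      _ = 2*(p:ℝ) * ((2*p+2)/p)^(K+1) := by ring

lemma fibKK_chain_pow (p : ℕ) (hp : 1 ≤ p) (K : ℕ) :
    ((2*(p:ℝ)+1)/p)^(∑ k ∈ Finset.range K, k) ≤ (fibKK (chainKK p K) : ℝ) := by
  have hp0 : (0:ℝ) < p := by positivity
  have hp1 : (1:ℝ) ≤ p := by exact_mod_cast hp
  have hμ1 : (1:ℝ) ≤ (2*(p:ℝ)+1)/p := by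
    rw [le_div_iff₀ hp0]; linarith
  induction K with
  | zero =>
      have h1 : 1 ≤ chainKK p 0 := by simp [chainKK]; omega
      simpa using (by exact_mod_cast fibKK_one_le h1 : (1:ℝ) ≤ (fibKK (chainKK p 0) : ℝ))
  | succ K ih =>
    have hc2p : 2*p ≤ chainKK p K := chainKK_ge p K
    have hc1 : 1 ≤ chainKK p K := by omega
    have hnat : 2*(chainKK p K/p)*fibKK (chainKK p K) ≤ fibKK (chainKK p (K+1)) := by
      have h := fibKK_lower (chainKK p K/p) (chainKK p K - 1)
      rw [show chainKK p K - 1 + 1 = chainKK p K by omega] at h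
      have e : chainKK p (K+1) = 2*(chainKK p K + chainKK p K/p) := rfl
      rw [e]
      exact h
    have hq : (chainKK p K : ℝ) ≤ 2*(p:ℝ)*((chainKK p K/p : ℕ):ℝ) := by
      exact_mod_cast chainKK_div_ge p hp K
    have hcr : 2*(p:ℝ)*((2*(p:ℝ)+1)/p)^K ≤ (chainKK p K : ℝ) := chainKK_real_ge p hp K
    have hqn : (0:ℝ) ≤ ((chainKK p K/p : ℕ):ℝ) := Nat.cast_nonneg _
    have h1 : ((2*(p:ℝ)+1)/p)^K ≤ 2*((chainKK p K/p : ℕ):ℝ) := by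
      have h2 : 2*(p:ℝ)*((2*(p:ℝ)+1)/p)^K ≤ 2*(p:ℝ)*((chainKK p K/p : ℕ):ℝ) := by
        linarith
      have h3 : ((2*(p:ℝ)+1)/p)^K ≤ ((chainKK p K/p : ℕ):ℝ) :=
        le_of_mul_le_mul_left (by linarith) (by positivity : (0:ℝ) < 2*(p:ℝ))
      linarith
    have hFc : (0:ℝ) ≤ (fibKK (chainKK p K) : ℝ) := Nat.cast_nonneg _
    have hcast : (2*(chainKK p K/p)*fibKK (chainKK p K) : ℕ) ≤ (fibKK (chainKK p (K+1)) : ℕ) := hnat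
    have hcastr : 2*((chainKK p K/p : ℕ):ℝ)*(fibKK (chainKK p K) : ℝ) ≤ (fibKK (chainKK p (K+1)) : ℝ) := by
      exact_mod_cast hcast
    have hpowpos : (0:ℝ) ≤ ((2*(p:ℝ)+1)/p)^K := by positivity
    calc ((2*(p:ℝ)+1)/p)^(∑ k ∈ Finset.range (K+1), k)
        = ((2*(p:ℝ)+1)/p)^K * ((2*(p:ℝ)+1)/p)^(∑ k ∈ Finset.range K, k) := by
          rw [Finset.sum_range_succ, pow_add]; ring
      _ ≤ ((2*(p:ℝ)+1)/p)^K * (fibKK (chainKK p K) : ℝ) :=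
          mul_le_mul_of_nonneg_left ih hpowpos
      _ ≤ (2*((chainKK p K/p : ℕ):ℝ)) * (fibKK (chainKK p K) : ℝ) :=
          mul_le_mul_of_nonneg_right h1 hFc
      _ ≤ (fibKK (chainKK p (K+1)) : ℝ) := by linarith

lemma div_eq_div_div' (x y z : ℝ) (hz : z ≠ 0) : x / y = (x/z)/(y/z) := by
  rcases eq_or_ne y 0 with h|h
  · simp [h]
  · field_simp

lemma sum_range_id_cast (K : ℕ) (hK : 1 ≤ K) :
    ((∑ k ∈ Finset.range K, k : ℕ) : ℝ) = K*((K:ℝ)-1)/2 := by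
  have h := Finset.sum_range_id_mul_two K
  have h2 : (((∑ k ∈ Finset.range K, k) * 2 : ℕ) : ℝ) = ((K * (K-1) : ℕ) : ℝ) := by
    exact_mod_cast congrArg (Nat.cast : ℕ → ℝ) h
  push_cast [Nat.cast_sub hK] at h2 ⊢
  linarith

lemma sum_range_add_one_cast (K : ℕ) :
    ((∑ j ∈ Finset.range K, (j+1) : ℕ) : ℝ) = K*((K:ℝ)+1)/2 := by
  have h : (∑ i ∈ Finset.range (K+1), i) = (∑ j ∈ Finset.range K, (j+1)) + 0 :=
    Finset.sum_range_succ' id K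
  have h2 := sum_range_id_cast (K+1) (by omega)
  rw [h] at h2
  push_cast at h2 ⊢
  linarith

lemma lim_one_div : Tendsto (fun k : ℕ => (1:ℝ)/k) atTop (nhds 0) :=
  tendsto_one_div_atTop_nhds_zero_nat

lemma lim_upper : Tendsto (fun k : ℕ => (((k:ℝ)+1)*((k:ℝ)+2)*Real.log 2) / (2*(((k:ℝ)*Real.log 2)^2)))
    atTop (nhds (1/(2*Real.log 2))) := by
  have hL : (0:ℝ) < Real.log 2 := Real.log_pos one_lt_two
  have ha : Tendsto (fun k : ℕ => 1+(1:ℝ)/k) atTop (nhds 1) := by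
    simpa using lim_one_div.const_add 1
  have hb : Tendsto (fun k : ℕ => 1+(2:ℝ)/k) atTop (nhds 1) := by
    have h2 : Tendsto (fun k : ℕ => (2:ℝ)/k) atTop (nhds 0) := by
      have := lim_one_div.const_mul (2:ℝ)
      simpa [div_eq_mul_inv] using this
    simpa using h2.const_add 1
  have h1 : Tendsto (fun k : ℕ => ((1+(1:ℝ)/k)*(1+2/k))/(2*Real.log 2)) atTop
      (nhds (1/(2*Real.log 2))) := by
    simpa using (ha.mul hb).div_const (2*Real.log 2)
  refine h1.congr' ?_
  filter_upwards [eventually_ge_atTop 1] with k hk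
  have hk0 : (k:ℝ) ≠ 0 := by
    have : (1:ℝ) ≤ (k:ℝ) := by exact_mod_cast hk
    linarith
  field_simp

lemma lim_lower (a b c : ℝ) (hb : 0 < b) :
    Tendsto (fun K : ℕ => ((↑(∑ k ∈ Finset.range K, k) : ℝ) * c) / ((a + ((K:ℝ)+1)*b)^2))
      atTop (nhds (c/(2*b^2))) := by
  have key : Tendsto (fun K : ℕ => (((1:ℝ)-1/K)*c/2) / ((a/K + (1+1/K)*b)^2)) atTop
      (nhds (c/(2*b^2))) := by
    have h1 : Tendsto (fun K : ℕ => ((1:ℝ)-1/K)*c/2) atTop (nhds (c/2)) := by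
      have : Tendsto (fun K : ℕ => (1:ℝ)-1/K) atTop (nhds 1) := by
        simpa using lim_one_div.const_sub 1
      simpa using (this.mul_const c).div_const 2
    have h2 : Tendsto (fun K : ℕ => (a/(K:ℝ) + (1+1/K)*b)^2) atTop (nhds (b^2)) := by
      have ha : Tendsto (fun K : ℕ => a/(K:ℝ)) atTop (nhds 0) := by
        have := lim_one_div.const_mul a
        simpa [div_eq_mul_inv] using this
      have hbb : Tendsto (fun K : ℕ => (1+(1:ℝ)/K)*b) atTop (nhds b) := by
        have : Tendsto (fun K : ℕ => 1+(1:ℝ)/K) atTop (nhds 1) := by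
          simpa using lim_one_div.const_add 1
        simpa using this.mul_const b
      have := (ha.add hbb).pow 2
      simpa using this
    have h3 := h1.div h2 (by positivity)
    have e : c/2/b^2 = c/(2*b^2) := by rw [div_div]
    rwa [e] at h3
  refine key.congr' ?_
  filter_upwards [eventually_ge_atTop 1] with K hK
  have hK0 : (K:ℝ) ≠ 0 := by
    have : (1:ℝ) ≤ (K:ℝ) := by exact_mod_cast hK
    linarith
  rw [sum_range_id_cast K hK]
  rw [div_eq_div_div' ((K:ℝ)*((K:ℝ)-1)/2*c) ((a + ((K:ℝ)+1)*b)^2) ((K:ℝ)^2) (pow_ne_zero _ hK0)]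
  congr 1
  · field_simp
  · rw [show (a + ((K:ℝ)+1)*b)^2 / (K:ℝ)^2 = ((a + ((K:ℝ)+1)*b)/(K:ℝ))^2 by rw [div_pow]]
    congr 1
    field_simp

lemma lim_p : Tendsto (fun p : ℕ => Real.log ((2*(p:ℝ)+1)/p) / (2*(Real.log ((2*(p:ℝ)+2)/p))^2))
    atTop (nhds (1/(2*Real.log 2))) := by
  have hL : (0:ℝ) < Real.log 2 := Real.log_pos one_lt_two
  have hμ : Tendsto (fun p : ℕ => (2*(p:ℝ)+1)/p) atTop (nhds 2) := by
    have : Tendsto (fun p : ℕ => (2:ℝ)+1/p) atTop (nhds 2) := by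
      simpa using lim_one_div.const_add 2
    refine this.congr' ?_
    filter_upwards [eventually_ge_atTop 1] with p hp
    have hp0 : (p:ℝ) ≠ 0 := by
      have : (1:ℝ) ≤ (p:ℝ) := by exact_mod_cast hp
      linarith
    field_simp
  have hlam : Tendsto (fun p : ℕ => (2*(p:ℝ)+2)/p) atTop (nhds 2) := by
    have h2 : Tendsto (fun p : ℕ => (2:ℝ)/p) atTop (nhds 0) := by
      have := lim_one_div.const_mul (2:ℝ)
      simpa [div_eq_mul_inv] using this
    have : Tendsto (fun p : ℕ => (2:ℝ)+2/p) atTop (nhds 2) := by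
      simpa using h2.const_add 2
    refine this.congr' ?_
    filter_upwards [eventually_ge_atTop 1] with p hp
    have hp0 : (p:ℝ) ≠ 0 := by
      have : (1:ℝ) ≤ (p:ℝ) := by exact_mod_cast hp
      linarith
    field_simp
  have hlog : ContinuousAt Real.log 2 := Real.continuousAt_log (by norm_num)
  have hμl : Tendsto (fun p : ℕ => Real.log ((2*(p:ℝ)+1)/p)) atTop (nhds (Real.log 2)) :=
    (hlog.tendsto).comp hμ
  have hlaml : Tendsto (fun p : ℕ => Real.log ((2*(p:ℝ)+2)/p)) atTop (nhds (Real.log 2)) :=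
    (hlog.tendsto).comp hlam
  have hden : Tendsto (fun p : ℕ => 2*(Real.log ((2*(p:ℝ)+2)/p))^2) atTop
      (nhds (2*(Real.log 2)^2)) := by
    have := (hlaml.pow 2).const_mul (2:ℝ)
    simpa using this
  have h := hμl.div hden (by positivity)
  have e : Real.log 2/(2*(Real.log 2)^2) = 1/(2*Real.log 2) := by
    field_simp
  rwa [e] at h

lemma chainKK_lt (p : ℕ) (hp : 1 ≤ p) : ∀ k, k < chainKK p k := by
  intro k
  induction k with
  | zero => show 0 < 2*p; omega
  | succ k ih =>
    have h := chainKK_ge p k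
    show k+1 < 2 * (chainKK p k + chainKK p k / p)
    have := Nat.zero_le (chainKK p k / p)
    generalize chainKK p k / p = q at *
    omega

lemma fibKK_ratio_le (n : ℕ) (hn : 2 ≤ n) :
    Real.log (fibKK n) / (Real.log n)^2 ≤
    (((Nat.log 2 n : ℝ)+1)*((Nat.log 2 n : ℝ)+2)*Real.log 2) /
      (2*(((Nat.log 2 n : ℝ))*Real.log 2)^2) := by
  have hL : (0:ℝ) < Real.log 2 := Real.log_pos one_lt_two
  set k := Nat.log 2 n with hkdef
  have hk1 : 1 ≤ k := by
    rw [hkdef]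
    exact (Nat.le_log_iff_pow_le one_lt_two (by omega)).2 (by simpa using hn)
  have hnlt : n < 2^(k+1) := Nat.lt_pow_succ_log_self one_lt_two n
  have hge : 2^k ≤ n := Nat.pow_log_le_self 2 (by omega)
  have hFn1 : 1 ≤ fibKK n := fibKK_one_le (by omega)
  have hFle : fibKK n ≤ 2^(∑ j ∈ Finset.range (k+1), (j+1)) :=
    le_trans (fibKK_mono (le_of_lt hnlt)) (fibKK_pow_le (k+1))
  have hlogF : Real.log (fibKK n) ≤ (((k:ℝ)+1)*((k:ℝ)+2)/2) * Real.log 2 := by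
    have h1 : Real.log (fibKK n) ≤ Real.log ((2:ℝ)^(∑ j ∈ Finset.range (k+1), (j+1))) := by
      apply Real.log_le_log (by exact_mod_cast hFn1)
      exact_mod_cast hFle
    rw [Real.log_pow] at h1
    have h2 := sum_range_add_one_cast (k+1)
    rw [h2] at h1
    push_cast at h1 ⊢
    nlinarith [hL]
  have hlogn : (k:ℝ)*Real.log 2 ≤ Real.log n := by
    have hge' : ((2:ℝ))^k ≤ (n:ℝ) := by exact_mod_cast hge
    have h := Real.log_le_log (x := (2:ℝ)^k) (by positivity) hge'
    rwa [Real.log_pow] at h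
  have hk0 : (0:ℝ) < (k:ℝ) := by exact_mod_cast hk1
  have hd : (0:ℝ) < ((k:ℝ)*Real.log 2)^2 := by positivity
  have hbd : ((k:ℝ)*Real.log 2)^2 ≤ (Real.log n)^2 := by
    apply pow_le_pow_left₀ (by positivity) hlogn
  have hnum0 : (0:ℝ) ≤ (((k:ℝ)+1)*((k:ℝ)+2)/2) * Real.log 2 := by positivity
  have hfinal := div_le_div₀ hnum0 hlogF hd hbd
  have e : ((((k:ℝ)+1)*((k:ℝ)+2)/2) * Real.log 2)/(((k:ℝ)*Real.log 2)^2)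
      = (((k:ℝ)+1)*((k:ℝ)+2)*Real.log 2) / (2*(((k:ℝ)*Real.log 2)^2)) := by
    rw [eq_div_iff (by positivity)]
    field_simp
  rwa [e] at hfinal

lemma fibKK_ratio_ge (p : ℕ) (hp : 1 ≤ p) (K n : ℕ)
    (h1 : chainKK p K ≤ n) (h2 : n < chainKK p (K+1)) :
    ((↑(∑ k ∈ Finset.range K, k) : ℝ) * Real.log ((2*(p:ℝ)+1)/p)) /
      ((Real.log (2*(p:ℝ)) + ((K:ℝ)+1)*Real.log ((2*(p:ℝ)+2)/p))^2) ≤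
    Real.log (fibKK n) / (Real.log n)^2 := by
  have hp0 : (0:ℝ) < p := by exact_mod_cast hp
  have hp1 : (1:ℝ) ≤ p := by exact_mod_cast hp
  have hmu1 : (1:ℝ) ≤ (2*(p:ℝ)+1)/p := by rw [le_div_iff₀ hp0]; linarith
  have hlam2 : (2:ℝ) ≤ (2*(p:ℝ)+2)/p := by rw [le_div_iff₀ hp0]; linarith
  have hcK := chainKK_ge p K
  have hn2 : 2 ≤ n := by omega
  have hn1 : (1:ℝ) < n := by exact_mod_cast (by omega : 1 < n)
  -- numerator bound
  have hpowF : ((2*(p:ℝ)+1)/p)^(∑ k ∈ Finset.range K, k) ≤ (fibKK n : ℝ) := by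
    calc ((2*(p:ℝ)+1)/p)^(∑ k ∈ Finset.range K, k) ≤ (fibKK (chainKK p K) : ℝ) :=
          fibKK_chain_pow p hp K
      _ ≤ (fibKK n : ℝ) := by exact_mod_cast fibKK_mono h1
  have hF1 : (1:ℝ) ≤ (fibKK n : ℝ) := by
    calc (1:ℝ) = ((2*(p:ℝ)+1)/p)^0 := by norm_num
      _ ≤ ((2*(p:ℝ)+1)/p)^(∑ k ∈ Finset.range K, k) := by
          apply pow_le_pow_right₀ hmu1 (Nat.zero_le _)
      _ ≤ (fibKK n : ℝ) := hpowF
  have hA : (↑(∑ k ∈ Finset.range K, k) : ℝ) * Real.log ((2*(p:ℝ)+1)/p)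
      ≤ Real.log (fibKK n) := by
    rw [← Real.log_pow]
    exact Real.log_le_log (by positivity) hpowF
  have hA0 : (0:ℝ) ≤ (↑(∑ k ∈ Finset.range K, k) : ℝ) * Real.log ((2*(p:ℝ)+1)/p) := by
    have := Real.log_nonneg hmu1
    positivity
  have hlogF0 : (0:ℝ) ≤ Real.log (fibKK n) := Real.log_nonneg hF1
  -- denominator bound
  have hchain_le : (chainKK p (K+1) : ℝ) ≤ 2*(p:ℝ)*((2*(p:ℝ)+2)/p)^(K+1) :=
    chainKK_real_le p hp (K+1)
  have hBn : Real.log n ≤ Real.log (2*(p:ℝ)) + ((K:ℝ)+1)*Real.log ((2*(p:ℝ)+2)/p) := by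
    have hstep : Real.log n ≤ Real.log (2*(p:ℝ)*((2*(p:ℝ)+2)/p)^(K+1)) := by
      apply Real.log_le_log (by positivity)
      calc (n:ℝ) ≤ (chainKK p (K+1) : ℝ) := by exact_mod_cast le_of_lt h2
        _ ≤ _ := hchain_le
    rw [Real.log_mul (by positivity) (by positivity), Real.log_pow] at hstep
    push_cast at hstep
    exact hstep
  have hlogn_pos : (0:ℝ) < Real.log n := Real.log_pos hn1
  have hB_pos : (0:ℝ) < Real.log (2*(p:ℝ)) + ((K:ℝ)+1)*Real.log ((2*(p:ℝ)+2)/p) :=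
    lt_of_lt_of_le hlogn_pos hBn
  have hd : (0:ℝ) < (Real.log n)^2 := by positivity
  have hbd : (Real.log n)^2 ≤ (Real.log (2*(p:ℝ)) + ((K:ℝ)+1)*Real.log ((2*(p:ℝ)+2)/p))^2 :=
    pow_le_pow_left₀ (le_of_lt hlogn_pos) hBn 2
  exact div_le_div₀ hlogF0 hA hd hbd


/-- For the Fibonacci-like sequence A033485 one has
`(ln F(n)) / (ln n)² → 1/(2 ln 2)` as `n → ∞`. -/
theorem log_fibKK_div_sq_log_tendsto :
    Tendsto (fun n : ℕ => Real.log (fibKK n) / (Real.log n) ^ 2) atTop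
      (nhds (1 / (2 * Real.log 2))) := by
  rw [tendsto_order]
  constructor
  · intro x hx
    have hev := lim_p.eventually_const_lt hx
    obtain ⟨p, hpx, hp1⟩ := (hev.and (eventually_ge_atTop 1)).exists
    have hp0 : (0:ℝ) < p := by exact_mod_cast hp1
    have hb : (0:ℝ) < Real.log ((2*(p:ℝ)+2)/p) := by
      apply Real.log_pos
      rw [lt_div_iff₀ hp0]; linarith
    have hh := lim_lower (Real.log (2*(p:ℝ))) (Real.log ((2*(p:ℝ)+2)/p))
      (Real.log ((2*(p:ℝ)+1)/p)) hb
    have hev2 := hh.eventually_const_lt hpx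
    obtain ⟨K1, hK1⟩ := eventually_atTop.1 hev2
    rw [eventually_atTop]
    refine ⟨chainKK p K1, fun n hn => ?_⟩
    have hK1n : K1 ≤ n := le_trans (le_of_lt (chainKK_lt p hp1 K1)) hn
    have hspec : chainKK p (Nat.findGreatest (fun K => chainKK p K ≤ n) n) ≤ n :=
      Nat.findGreatest_spec (P := fun K => chainKK p K ≤ n) hK1n hn
    have hge : K1 ≤ Nat.findGreatest (fun K => chainKK p K ≤ n) n :=
      Nat.le_findGreatest hK1n hn
    have hlt : n < chainKK p ((Nat.findGreatest (fun K => chainKK p K ≤ n) n)+1) := by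
      by_cases hcase : (Nat.findGreatest (fun K => chainKK p K ≤ n) n)+1 ≤ n
      · have := Nat.findGreatest_is_greatest (P := fun K => chainKK p K ≤ n)
          (by omega : Nat.findGreatest (fun K => chainKK p K ≤ n) n
            < (Nat.findGreatest (fun K => chainKK p K ≤ n) n)+1) hcase
        omega
      · have := chainKK_lt p hp1 ((Nat.findGreatest (fun K => chainKK p K ≤ n) n)+1)
        omega
    exact lt_of_lt_of_le (hK1 _ hge) (fibKK_ratio_ge p hp1 _ n hspec hlt)
  · intro x hx
    have hlog2 : Tendsto (fun n : ℕ => Nat.log 2 n) atTop atTop := by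
      apply tendsto_atTop_atTop.2
      intro m
      refine ⟨2^m, fun n hn => ?_⟩
      have hm : 1 ≤ 2^m := Nat.one_le_two_pow
      exact (Nat.le_log_iff_pow_le one_lt_two (by omega)).2 hn
    have hcomp := lim_upper.comp hlog2
    have hev := hcomp.eventually_lt_const hx
    simp only [Function.comp] at hev
    filter_upwards [hev, eventually_ge_atTop 2] with n h1 h2
    exact lt_of_le_of_lt (fibKK_ratio_le n h2) h1
end
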